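/- arXiv:2007.13082 — 6 statements merged into one kernel-verified Lean document; each statement's English description precedes it below -/
import Mathlib

section
/- Let H be a connected simple undirected graph with at least one edge and let G = L(H) be its line graph. Then the clique complex Δ(G) is pure if and only if one of the following holds: (1) H has no triangles and there is an integer r > 3 such that every vertex of H has degree either 1 or r; (2) the maximum degree of H is 3 and every vertex of H of degree 2 is contained in a triangle; (3) H is a path or a cycle. -/
open Finset SimpleGraph

variable {V : Type*} [DecidableEq V]

/-- An abstract simplicial complex: contains the empty face and is downward closed. -/
def IsComplex (K : Set (Finset V)) : Prop :=
  (∅ : Finset V) ∈ K ∧ ∀ F ∈ K, ∀ G ⊆ F, G ∈ K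

/-- `F` is a facet (maximal face) of `K`. -/
def IsFacet (K : Set (Finset V)) (F : Finset V) : Prop :=
  F ∈ K ∧ ∀ G ∈ K, F ⊆ G → F = G

/-- `K` is pure: all facets have the same cardinality. -/
def IsPure (K : Set (Finset V)) : Prop :=
  ∀ F G, IsFacet K F → IsFacet K G → F.card = G.card

/-- Deletion `K - v`. -/
def del (K : Set (Finset V)) (v : V) : Set (Finset V) := {F ∈ K | v ∉ F}

/-- The link of a vertex. -/
def link (K : Set (Finset V)) (v : V) : Set (Finset V) :=
  {F | v ∉ F ∧ insert v F ∈ K}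

/-- A shedding vertex: a vertex such that no face of the link is a facet of the deletion. -/
def IsSheddingVertex (K : Set (Finset V)) (v : V) : Prop :=
  ({v} : Finset V) ∈ K ∧ ∀ F ∈ link K v, ¬ IsFacet (del K v) F

/-- `K` is a (possibly empty-face-only) simplex: the power set of some finset. -/
def IsSimplexComplex (K : Set (Finset V)) : Prop :=
  ∃ F : Finset V, K = {G | G ⊆ F}

/-- Vertex decomposability. -/
inductive VertexDecomposable : Set (Finset V) → Prop
  | simplex (K : Set (Finset V)) : IsSimplexComplex K → VertexDecomposable K
  | shed (K : Set (Finset V)) (v : V) : IsSheddingVertex K v →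
      VertexDecomposable (link K v) → VertexDecomposable (del K v) →
      VertexDecomposable K

/-- The complex generated by a family of finsets. -/
def gen (S : Set (Finset V)) : Set (Finset V) := {G | ∃ F ∈ S, G ⊆ F}

/-- A shelling order of the facets of `K`. -/
def IsShelling (K : Set (Finset V)) (l : List (Finset V)) : Prop :=
  l.Nodup ∧ (∀ F, IsFacet K F ↔ F ∈ l) ∧
  ∀ i : ℕ, (h : i + 1 < l.length) →
    (∃ F, IsFacet (gen {F | F ∈ l.take (i+1)} ∩ gen {l.get ⟨i+1, h⟩}) F) ∧
    ∀ F, IsFacet (gen {F | F ∈ l.take (i+1)} ∩ gen {l.get ⟨i+1, h⟩}) F →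
      F.card + 1 = (l.get ⟨i+1, h⟩).card

def Shellable (K : Set (Finset V)) : Prop := ∃ l, IsShelling K l

/-- Two facets are adjacent (intersect in codimension one). -/
def FacetAdj (K : Set (Finset V)) (F G : Finset V) : Prop :=
  IsFacet K F ∧ IsFacet K G ∧ (F ∩ G).card + 1 = F.card ∧ (F ∩ G).card + 1 = G.card

/-- A pure complex is strongly connected (connected in codimension 1). -/
def StronglyConnected (K : Set (Finset V)) : Prop :=
  IsPure K ∧ ∀ F G, IsFacet K F → IsFacet K G → Relation.ReflTransGen (FacetAdj K) F G

/-- The clique complex of a graph. -/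
def cliqueComplex (G : SimpleGraph V) : Set (Finset V) := {F | G.IsClique (F : Set V)}

/-- The pure `i`-skeleton of `K`: generated by the faces of dimension `i`. -/
def pureSkeleton (K : Set (Finset V)) (i : ℕ) : Set (Finset V) :=
  {G | ∃ F ∈ K, F.card = i + 1 ∧ G ⊆ F}

/-- The link of a face. -/
def linkFace (K : Set (Finset V)) (F : Finset V) : Set (Finset V) :=
  {G | Disjoint F G ∧ F ∪ G ∈ K}

section Homology
variable (k : Type*) [Field k]

/-- Boundary of a single face, w.r.t. a linear order `lo` on the vertices. -/
noncomputable def bdFace (lo : LinearOrder V) (F : Finset V) : Finset V →₀ k :=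
  letI := lo
  ∑ v ∈ F, ((-1 : k) ^ ((F.filter (fun w => w < v)).card)) • Finsupp.single (F.erase v) (1 : k)

/-- The boundary operator of the augmented oriented chain complex, w.r.t. `lo`. -/
noncomputable def bd (lo : LinearOrder V) (c : Finset V →₀ k) : Finset V →₀ k :=
  c.sum fun F a => a • bdFace k lo F

/-- The reduced homology of `K` in the degree of faces of cardinality `j`
(i.e. dimension `j - 1`) vanishes over `k`. -/
def HomologyVanishes (K : Set (Finset V)) (j : ℕ) : Prop :=
  ∀ lo : LinearOrder V, ∀ c : Finset V →₀ k,
    (∀ F ∈ c.support, F ∈ K ∧ F.card = j) → bd k lo c = 0 →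
      ∃ d : Finset V →₀ k, (∀ F ∈ d.support, F ∈ K ∧ F.card = j + 1) ∧ bd k lo d = c

/-- Reisner's criterion: `K` is Cohen–Macaulay over the field `k`. -/
def IsCMover (K : Set (Finset V)) : Prop :=
  ∀ F ∈ K, ∀ j : ℕ, (∃ G ∈ linkFace K F, j < G.card) →
    HomologyVanishes k (linkFace K F) j

/-- `K` is sequentially Cohen–Macaulay over `k`. -/
def IsSeqCMover (K : Set (Finset V)) : Prop :=
  ∀ i : ℕ, IsCMover k (pureSkeleton K i)

/-- The core of a complex. -/
def core (K : Set (Finset V)) : Set (Finset V) :=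
  {F ∈ K | ∀ v ∈ F, ∃ G, IsFacet K G ∧ v ∉ G}

/-- The top reduced homology of `K` is one-dimensional (`≅ k`), where the top
cardinality of a face of `K` is `m`. -/
def TopHomologyIsK (K : Set (Finset V)) (m : ℕ) : Prop :=
  (∃ G ∈ K, G.card = m) ∧ (∀ G ∈ K, G.card ≤ m) ∧
  ∀ lo : LinearOrder V, ∃ c : Finset V →₀ k, c ≠ 0 ∧
    (∀ F ∈ c.support, F ∈ K ∧ F.card = m) ∧ bd k lo c = 0 ∧
    ∀ c' : Finset V →₀ k, (∀ F ∈ c'.support, F ∈ K ∧ F.card = m) → bd k lo c' = 0 →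
      ∃ a : k, c' = a • c

/-- Stanley's criterion: `K` is Gorenstein over `k`. -/
def IsGorensteinOver (K : Set (Finset V)) : Prop :=
  ∀ F ∈ core K, ∃ m : ℕ,
    TopHomologyIsK k (linkFace (core K) F) m ∧
    ∀ j : ℕ, j < m → HomologyVanishes k (linkFace (core K) F) j

end Homology

set_option linter.unusedSectionVars false
section Aux
variable {V : Type} [DecidableEq V] [Fintype V] (H : SimpleGraph V) [DecidableRel H.Adj]

/-- The star of a vertex: edges incident to `v`, as a finset of `H.edgeSet`. -/
def starF (v : V) : Finset H.edgeSet := Finset.univ.filter (fun e => v ∈ (e : Sym2 V))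

@[simp] lemma mem_starF {v : V} {e : H.edgeSet} : e ∈ starF H v ↔ v ∈ (e : Sym2 V) := by
  simp [starF]

lemma card_starF (v : V) : (starF H v).card = H.degree v := by
  rw [← SimpleGraph.card_incidenceFinset_eq_degree]
  refine Finset.card_bij (fun e _ => (e : Sym2 V)) ?_ ?_ ?_
  · intro e he
    rw [SimpleGraph.mem_incidenceFinset]
    exact ⟨e.2, by simpa using he⟩
  · intro a ha b hb hab
    exact Subtype.ext hab
  · intro e he
    rw [SimpleGraph.mem_incidenceFinset] at he
    exact ⟨⟨e, he.1⟩, by simpa using he.2, rfl⟩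

/-- The (edge finset of the) triangle on `a b c`. -/
def triF (a b c : V) : Finset H.edgeSet :=
  Finset.univ.filter (fun e => (e : Sym2 V) = s(a,b) ∨ (e : Sym2 V) = s(a,c) ∨ (e : Sym2 V) = s(b,c))

@[simp] lemma mem_triF {a b c : V} {e : H.edgeSet} :
    e ∈ triF H a b c ↔ ((e : Sym2 V) = s(a,b) ∨ (e : Sym2 V) = s(a,c) ∨ (e : Sym2 V) = s(b,c)) := by
  simp [triF]

lemma card_triF {a b c : V} (hab : H.Adj a b) (hac : H.Adj a c) (hbc : H.Adj b c) :
    (triF H a b c).card = 3 := by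
  have h1 : triF H a b c = {(⟨s(a,b), hab⟩ : H.edgeSet), ⟨s(a,c), hac⟩, ⟨s(b,c), hbc⟩} := by
    ext e
    simp [Subtype.ext_iff]
  rw [h1]
  have hab' := hab.ne
  have hac' := hac.ne
  have hbc' := hbc.ne
  rw [Finset.card_insert_of_notMem, Finset.card_insert_of_notMem, Finset.card_singleton]
  · simp only [Finset.mem_singleton, Subtype.ext_iff, Sym2.eq_iff]
    tauto
  · simp only [Finset.mem_insert, Finset.mem_singleton, Subtype.ext_iff, Sym2.eq_iff]
    push_neg
    constructor <;> tauto

lemma clique_share {F : Finset H.edgeSet} (hF : F ∈ cliqueComplex H.lineGraph)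
    {e f : H.edgeSet} (he : e ∈ F) (hf : f ∈ F) (hef : e ≠ f) :
    ∃ x, x ∈ (e : Sym2 V) ∧ x ∈ (f : Sym2 V) := by
  have h := hF (Finset.mem_coe.mpr he) (Finset.mem_coe.mpr hf) hef
  exact (SimpleGraph.lineGraph_adj_iff_exists.mp h).2

lemma star_clique (v : V) : starF H v ∈ cliqueComplex H.lineGraph := by
  intro e he f hf hef
  rw [SimpleGraph.lineGraph_adj_iff_exists]
  exact ⟨hef, v, (mem_starF H).1 he, (mem_starF H).1 hf⟩

lemma tri_clique {a b c : V} (hab : H.Adj a b) (hac : H.Adj a c) (hbc : H.Adj b c) :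
    triF H a b c ∈ cliqueComplex H.lineGraph := by
  intro e he f hf hef
  rw [SimpleGraph.lineGraph_adj_iff_exists]
  refine ⟨hef, ?_⟩
  rcases (mem_triF H).1 he with h1|h1|h1 <;> rcases (mem_triF H).1 hf with h2|h2|h2 <;>
    rw [h1, h2] <;>
    first
      | exact ⟨_, Sym2.mem_mk_left _ _, Sym2.mem_mk_left _ _⟩
      | exact ⟨_, Sym2.mem_mk_left _ _, Sym2.mem_mk_right _ _⟩
      | exact ⟨_, Sym2.mem_mk_right _ _, Sym2.mem_mk_left _ _⟩
      | exact ⟨_, Sym2.mem_mk_right _ _, Sym2.mem_mk_right _ _⟩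

lemma edge_adj {x y : V} (e : H.edgeSet) (h : (e : Sym2 V) = s(x,y)) : H.Adj x y :=
  (H.mem_edgeSet).1 (h ▸ e.2)

lemma extend_to_facet {F : Finset H.edgeSet} (hF : F ∈ cliqueComplex H.lineGraph) :
    ∃ G, F ⊆ G ∧ IsFacet (cliqueComplex H.lineGraph) G := by
  classical
  have hfin : {G : Finset H.edgeSet | G ∈ cliqueComplex H.lineGraph ∧ F ⊆ G}.Finite :=
    Set.toFinite _
  obtain ⟨G, hG, hmax⟩ : ∃ G ∈ {G : Finset H.edgeSet | G ∈ cliqueComplex H.lineGraph ∧ F ⊆ G},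
      ∀ G' ∈ {G : Finset H.edgeSet | G ∈ cliqueComplex H.lineGraph ∧ F ⊆ G},
        G.card ≤ G'.card → G.card = G'.card := by
    obtain ⟨G, hm⟩ := hfin.exists_maximalFor Finset.card _ ⟨F, hF, Finset.Subset.refl F⟩
    exact ⟨G, hm.1, fun G' h1 h2 => le_antisymm h2 (hm.2 h1 h2)⟩
  refine ⟨G, hG.2, hG.1, fun G' hG' hsub => ?_⟩
  have : G' ∈ {G : Finset H.edgeSet | G ∈ cliqueComplex H.lineGraph ∧ F ⊆ G} :=
    ⟨hG', hG.2.trans hsub⟩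
  exact Finset.eq_of_subset_of_card_le hsub
    ((hmax G' this (Finset.card_le_card hsub)).ge)

lemma three_mem_sym2 {x y z : V} (e : Sym2 V) (hx : x ∈ e) (hy : y ∈ e) (hz : z ∈ e)
    (hxy : x ≠ y) (hxz : x ≠ z) (hyz : y ≠ z) : False := by
  induction e with
  | _ p q =>
    simp only [Sym2.mem_iff] at hx hy hz
    rcases hx with rfl|rfl <;> rcases hy with rfl|rfl <;> rcases hz with rfl|rfl <;> simp_all
lemma clique_shape [Nonempty V] {F : Finset H.edgeSet} (hF : F ∈ cliqueComplex H.lineGraph) :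
    (∃ v, F ⊆ starF H v) ∨
    (∃ a b c, H.Adj a b ∧ H.Adj a c ∧ H.Adj b c ∧ F ⊆ triF H a b c) := by
  by_cases hcom : ∃ v, ∀ e ∈ F, v ∈ (e : Sym2 V)
  · obtain ⟨v, hv⟩ := hcom
    exact Or.inl ⟨v, fun e he => (mem_starF H).2 (hv e he)⟩
  push_neg at hcom
  right
  obtain ⟨e, heF, -⟩ := hcom (Classical.arbitrary V)
  obtain ⟨⟨a, b⟩, hab'⟩ := Quot.exists_rep (e : Sym2 V)
  have hab_eq : (e : Sym2 V) = s(a, b) := hab'.symm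
  have hAdjab : H.Adj a b := edge_adj H e hab_eq
  obtain ⟨f, hfF, haf⟩ := hcom a
  have hfe : f ≠ e := fun h => haf (h ▸ (hab_eq ▸ Sym2.mem_mk_left a b : a ∈ (e : Sym2 V)))
  obtain ⟨x, hxe, hxf⟩ := clique_share H hF heF hfF hfe.symm
  have hbf : b ∈ (f : Sym2 V) := by
    rw [hab_eq, Sym2.mem_iff] at hxe
    rcases hxe with rfl | rfl
    · exact absurd hxf haf
    · exact hxf
  obtain ⟨c, hf_eq⟩ := Sym2.mem_iff_exists.1 hbf
  have hAdjbc : H.Adj b c := edge_adj H f hf_eq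
  have hca : c ≠ a := by
    rintro rfl
    exact haf (hf_eq ▸ Sym2.mem_mk_right b c)
  obtain ⟨g, hgF, hbg⟩ := hcom b
  have hbe : b ∈ (e : Sym2 V) := by rw [hab_eq]; exact Sym2.mem_mk_right a b
  have hge : g ≠ e := fun h => hbg (h ▸ hbe)
  have hgf : g ≠ f := fun h => hbg (h ▸ (hf_eq ▸ Sym2.mem_mk_left b c : b ∈ (f : Sym2 V)))
  obtain ⟨y, hyg, hye⟩ := clique_share H hF hgF heF hge
  have hag : a ∈ (g : Sym2 V) := by
    rw [hab_eq, Sym2.mem_iff] at hye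
    rcases hye with rfl | rfl
    · exact hyg
    · exact absurd hyg hbg
  obtain ⟨z, hzg, hzf⟩ := clique_share H hF hgF hfF hgf
  have hcg : c ∈ (g : Sym2 V) := by
    rw [hf_eq, Sym2.mem_iff] at hzf
    rcases hzf with rfl | rfl
    · exact absurd hzg hbg
    · exact hzg
  have hg_eq : (g : Sym2 V) = s(a, c) := (Sym2.mem_and_mem_iff hca.symm).1 ⟨hag, hcg⟩
  have hAdjac : H.Adj a c := edge_adj H g hg_eq
  refine ⟨a, b, c, hAdjab, hAdjac, hAdjbc, fun h hh => ?_⟩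
  rw [mem_triF]
  by_cases hah : a ∈ (h : Sym2 V)
  · have hhf : h ≠ f := fun hEq => haf (hEq ▸ hah)
    obtain ⟨w, hwh, hwf⟩ := clique_share H hF hh hfF hhf
    rw [hf_eq, Sym2.mem_iff] at hwf
    rcases hwf with rfl | rfl
    · exact Or.inl ((Sym2.mem_and_mem_iff hAdjab.ne).1 ⟨hah, hwh⟩)
    · exact Or.inr (Or.inl ((Sym2.mem_and_mem_iff hAdjac.ne).1 ⟨hah, hwh⟩))
  · have hhe : h ≠ e := fun hEq => hah (hEq ▸ (hab_eq ▸ Sym2.mem_mk_left a b : a ∈ (e : Sym2 V)))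
    obtain ⟨w, hwh, hwe⟩ := clique_share H hF hh heF hhe
    have hbh : b ∈ (h : Sym2 V) := by
      rw [hab_eq, Sym2.mem_iff] at hwe
      rcases hwe with rfl | rfl
      · exact absurd hwh hah
      · exact hwh
    have hhg : h ≠ g := fun hEq => hah (hEq ▸ hag)
    obtain ⟨w', hw'h, hw'g⟩ := clique_share H hF hh hgF hhg
    have hch : c ∈ (h : Sym2 V) := by
      rw [hg_eq, Sym2.mem_iff] at hw'g
      rcases hw'g with rfl | rfl
      · exact absurd hw'h hah
      · exact hw'h
    exact Or.inr (Or.inr ((Sym2.mem_and_mem_iff hAdjbc.ne).1 ⟨hbh, hch⟩))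
lemma facet_shape [Nonempty V] {F : Finset H.edgeSet}
    (hF : IsFacet (cliqueComplex H.lineGraph) F) :
    (∃ a b c, H.Adj a b ∧ H.Adj a c ∧ H.Adj b c ∧ F = triF H a b c) ∨ ∃ v, F = starF H v := by
  rcases clique_shape H hF.1 with ⟨v, hv⟩ | ⟨a, b, c, hab, hac, hbc, hsub⟩
  · exact Or.inr ⟨v, hF.2 _ (star_clique H v) hv⟩
  · exact Or.inl ⟨a, b, c, hab, hac, hbc, hF.2 _ (tri_clique H hab hac hbc) hsub⟩

lemma tri_facet {a b c : V} (hab : H.Adj a b) (hac : H.Adj a c) (hbc : H.Adj b c) :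
    IsFacet (cliqueComplex H.lineGraph) (triF H a b c) := by
  refine ⟨tri_clique H hab hac hbc, fun G hG hsub => Finset.Subset.antisymm hsub fun h hh => ?_⟩
  have heab : (⟨s(a,b), hab⟩ : H.edgeSet) ∈ G := hsub (by simp)
  have heac : (⟨s(a,c), hac⟩ : H.edgeSet) ∈ G := hsub (by simp)
  have hebc : (⟨s(b,c), hbc⟩ : H.edgeSet) ∈ G := hsub (by simp)
  rw [mem_triF]
  by_cases hah : a ∈ (h : Sym2 V)
  · by_cases h1 : h = ⟨s(b,c), hbc⟩
    · exact Or.inr (Or.inr (by rw [h1]))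
    · obtain ⟨w, hwh, hwe⟩ := clique_share H hG hh hebc h1
      rw [Sym2.mem_iff] at hwe
      rcases hwe with rfl | rfl
      · exact Or.inl ((Sym2.mem_and_mem_iff hab.ne).1 ⟨hah, hwh⟩)
      · exact Or.inr (Or.inl ((Sym2.mem_and_mem_iff hac.ne).1 ⟨hah, hwh⟩))
  · have h1 : h ≠ ⟨s(a,b), hab⟩ := by rintro rfl; exact hah (Sym2.mem_mk_left a b)
    have h2 : h ≠ ⟨s(a,c), hac⟩ := by rintro rfl; exact hah (Sym2.mem_mk_left a c)
    obtain ⟨w, hwh, hwe⟩ := clique_share H hG hh heab h1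
    rw [Sym2.mem_iff] at hwe
    have hbh : b ∈ (h : Sym2 V) := by
      rcases hwe with rfl | rfl
      · exact absurd hwh hah
      · exact hwh
    obtain ⟨w', hw'h, hw'e⟩ := clique_share H hG hh heac h2
    rw [Sym2.mem_iff] at hw'e
    have hch : c ∈ (h : Sym2 V) := by
      rcases hw'e with rfl | rfl
      · exact absurd hw'h hah
      · exact hw'h
    exact Or.inr (Or.inr ((Sym2.mem_and_mem_iff hbc.ne).1 ⟨hbh, hch⟩))

lemma star_facet {v : V} (h2 : 2 ≤ H.degree v)
    (hX : (∀ a b, H.Adj v a → H.Adj v b → a ≠ b → ¬ H.Adj a b) ∨ 3 ≤ H.degree v) :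
    IsFacet (cliqueComplex H.lineGraph) (starF H v) := by
  refine ⟨star_clique H v, fun G hG hsub => Finset.Subset.antisymm hsub fun h hh => ?_⟩
  rw [mem_starF]
  by_contra hvh
  have key : ∀ x, H.Adj v x → x ∈ (h : Sym2 V) := by
    intro x hvx
    have hex : (⟨s(v,x), hvx⟩ : H.edgeSet) ∈ G :=
      hsub ((mem_starF H).2 (Sym2.mem_mk_left v x))
    have hne : h ≠ ⟨s(v,x), hvx⟩ := by
      rintro rfl; exact hvh (Sym2.mem_mk_left v x)
    obtain ⟨w, hwh, hwe⟩ := clique_share H hG hh hex hne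
    rw [Sym2.mem_iff] at hwe
    rcases hwe with rfl | rfl
    · exact absurd hwh hvh
    · exact hwh
  rcases hX with hX | hX
  · rw [← SimpleGraph.card_neighborFinset_eq_degree] at h2
    obtain ⟨a, ha, b, hb, hne⟩ := Finset.one_lt_card.1 h2
    rw [SimpleGraph.mem_neighborFinset] at ha hb
    have hab : (h : Sym2 V) = s(a, b) := (Sym2.mem_and_mem_iff hne).1 ⟨key a ha, key b hb⟩
    exact hX a b ha hb hne (edge_adj H h hab)
  · rw [← SimpleGraph.card_neighborFinset_eq_degree] at hX
    obtain ⟨a, b, c, ha, hb, hc, hab, hac, hbc⟩ :=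
      Finset.two_lt_card_iff.1 hX
    rw [SimpleGraph.mem_neighborFinset] at ha hb hc
    exact three_mem_sym2 (h : Sym2 V) (key a ha) (key b hb) (key c hc) hab hac hbc
lemma closed_eq_univ (hconn : H.Connected) {S : Set V} (hne : S.Nonempty)
    (hcl : ∀ u ∈ S, ∀ w, H.Adj u w → w ∈ S) (x : V) : x ∈ S := by
  obtain ⟨s, hs⟩ := hne
  obtain ⟨w⟩ := hconn.preconnected s x
  have key : ∀ {u y : V} (_ : H.Walk u y), u ∈ S → y ∈ S := by
    intro u y p
    induction p with
    | nil => exact id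
    | cons h p ih => exact fun hu => ih (hcl _ hu _ h)
  exact key w hs
lemma adj_eq_of_degree_le_one {u z w : V} (h : H.degree u ≤ 1) (hz : H.Adj u z)
    (hw : H.Adj u w) : z = w := by
  have hz' : z ∈ H.neighborFinset u := (H.mem_neighborFinset u z).2 hz
  have hw' : w ∈ H.neighborFinset u := (H.mem_neighborFinset u w).2 hw
  rw [← SimpleGraph.card_neighborFinset_eq_degree] at h
  exact Finset.card_le_one.1 h z hz' w hw'

lemma adj3 {u a b c : V} (h : H.degree u ≤ 2) (ha : H.Adj u a) (hb : H.Adj u b)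
    (hc : H.Adj u c) : a = b ∨ a = c ∨ b = c := by
  by_contra hcon
  push_neg at hcon
  have hsub : ({a, b, c} : Finset V) ⊆ H.neighborFinset u := by
    intro x hx
    simp only [Finset.mem_insert, Finset.mem_singleton] at hx
    rcases hx with rfl | rfl | rfl <;> rw [SimpleGraph.mem_neighborFinset] <;> assumption
  have hcard : ({a, b, c} : Finset V).card = 3 := by
    rw [Finset.card_insert_of_notMem (by simp [hcon.1, hcon.2.1]),
      Finset.card_insert_of_notMem (by simp [hcon.2.2]), Finset.card_singleton]
  have := Finset.card_le_card hsub
  rw [hcard, SimpleGraph.card_neighborFinset_eq_degree] at this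
  omega

lemma degree_pos (hconn : H.Connected) (hedge : H.edgeSet.Nonempty) (v : V) :
    0 < H.degree v := by
  rw [SimpleGraph.degree_pos_iff_exists_adj]
  obtain ⟨e, he⟩ := hedge
  obtain ⟨⟨x, y⟩, hxy⟩ := Quot.exists_rep e
  have hadj : H.Adj x y := (H.mem_edgeSet).1 (by rwa [← hxy] at he)
  by_cases hx : x = v
  · exact ⟨y, hx ▸ hadj⟩
  · obtain ⟨w⟩ := hconn.preconnected v x
    cases w with
    | nil => exact absurd rfl hx
    | cons h p => exact ⟨_, h⟩

lemma all_deg_one (hconn : H.Connected) {u v : V} (huv : H.Adj u v)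
    (hu : H.degree u = 1) (hv : H.degree v = 1) (w : V) : H.degree w = 1 := by
  have hw : w ∈ ({u, v} : Set V) := by
    refine closed_eq_univ H hconn ⟨u, by simp⟩ ?_ w
    rintro z (rfl | rfl) t ht
    · exact Or.inr (adj_eq_of_degree_le_one H hu.le ht huv ▸ rfl)
    · exact Or.inl (adj_eq_of_degree_le_one H hv.le ht huv.symm ▸ rfl)
  rcases hw with rfl | rfl <;> assumption

lemma singleton_clique (e : H.edgeSet) : ({e} : Finset H.edgeSet) ∈ cliqueComplex H.lineGraph := by
  intro x hx y hy hxy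
  simp only [Finset.coe_singleton, Set.mem_singleton_iff] at hx hy
  exact absurd (hx.trans hy.symm) hxy

lemma facet_nonempty (hedge : H.edgeSet.Nonempty) {F : Finset H.edgeSet}
    (hF : IsFacet (cliqueComplex H.lineGraph) F) : F.Nonempty := by
  rcases Finset.eq_empty_or_nonempty F with rfl | h
  · obtain ⟨e, he⟩ := hedge
    have := hF.2 {⟨e, he⟩} (singleton_clique H _) (Finset.empty_subset _)
    exact absurd this.symm (Finset.singleton_ne_empty _)
  · exact h

lemma facet_star_deg_one (hconn : H.Connected) {v : V}
    (hF : IsFacet (cliqueComplex H.lineGraph) (starF H v)) (hv : H.degree v = 1)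
    (w : V) : H.degree w = 1 := by
  have hcard : (starF H v).card = 1 := by rw [card_starF]; exact hv
  obtain ⟨e, he⟩ := Finset.card_eq_one.1 hcard
  have hve : v ∈ (e : Sym2 V) := (mem_starF H).1 (he ▸ Finset.mem_singleton_self e)
  obtain ⟨u, hu_eq⟩ := Sym2.mem_iff_exists.1 hve
  have hadj : H.Adj v u := edge_adj H e hu_eq
  have hsub : starF H v ⊆ starF H u := by
    rw [he]
    intro x hx
    rw [Finset.mem_singleton] at hx
    subst hx
    exact (mem_starF H).2 (by rw [hu_eq]; exact Sym2.mem_mk_right v u)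
  have heq := hF.2 _ (star_clique H u) hsub
  have hu1 : H.degree u = 1 := by
    rw [← card_starF, ← heq, hcard]
  exact all_deg_one H hconn hadj hv hu1 w

lemma nbr_of_deg_two {v a b x : V} (hdeg : H.degree v ≤ 2) (ha : H.Adj v a) (hb : H.Adj v b)
    (hab : a ≠ b) (hx : H.Adj v x) : x = a ∨ x = b := by
  rcases adj3 H hdeg hx ha hb with h | h | h
  · exact Or.inl h
  · exact Or.inr h
  · exact absurd h hab
lemma nonempty_of_edge (hedge : H.edgeSet.Nonempty) : Nonempty V := by
  obtain ⟨e, -⟩ := hedge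
  obtain ⟨⟨x, y⟩, -⟩ := Quot.exists_rep e
  exact ⟨x⟩

lemma star_subset_tri {v a b : V} (hdeg : H.degree v ≤ 2) (ha : H.Adj v a) (hb : H.Adj v b)
    (hab : H.Adj a b) : starF H v ⊆ triF H v a b := by
  intro e he
  have hve := (mem_starF H).1 he
  obtain ⟨x, hx_eq⟩ := Sym2.mem_iff_exists.1 hve
  have hvx : H.Adj v x := edge_adj H e hx_eq
  rw [mem_triF]
  rcases nbr_of_deg_two H hdeg ha hb hab.ne hvx with rfl | rfl
  · exact Or.inl hx_eq
  · exact Or.inr (Or.inl hx_eq)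

lemma pure_of_case1 (hconn : H.Connected) (hedge : H.edgeSet.Nonempty)
    (htf : ¬ ∃ a b c : V, H.Adj a b ∧ H.Adj a c ∧ H.Adj b c)
    {r : ℕ} (hr : 3 ≤ r) (hdeg : ∀ v, H.degree v = 1 ∨ H.degree v = r) :
    IsPure (cliqueComplex H.lineGraph) := by
  have : Nonempty V := nonempty_of_edge H hedge
  intro F G hF hG
  rcases facet_shape H hF with ⟨a, b, c, hab, hac, hbc, -⟩ | ⟨v, rfl⟩
  · exact absurd ⟨a, b, c, hab, hac, hbc⟩ htf
  rcases facet_shape H hG with ⟨a, b, c, hab, hac, hbc, -⟩ | ⟨w, rfl⟩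
  · exact absurd ⟨a, b, c, hab, hac, hbc⟩ htf
  rw [card_starF, card_starF]
  rcases hdeg v with hv | hv
  · rw [hv, (facet_star_deg_one H hconn hF hv) w]
  rcases hdeg w with hw | hw
  · have := (facet_star_deg_one H hconn hG hw) v
    omega
  · rw [hv, hw]

lemma pure_of_case2 (hconn : H.Connected) (hedge : H.edgeSet.Nonempty)
    (hmax : ∀ v, H.degree v ≤ 3) (hex3 : ∃ v, H.degree v = 3)
    (htri2 : ∀ v, H.degree v = 2 → ∃ a b, H.Adj v a ∧ H.Adj v b ∧ H.Adj a b) :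
    IsPure (cliqueComplex H.lineGraph) := by
  have : Nonempty V := nonempty_of_edge H hedge
  have key : ∀ F, IsFacet (cliqueComplex H.lineGraph) F → F.card = 3 := by
    intro F hF
    rcases facet_shape H hF with ⟨a, b, c, hab, hac, hbc, rfl⟩ | ⟨v, rfl⟩
    · exact card_triF H hab hac hbc
    rw [card_starF]
    have h0 := degree_pos H hconn hedge v
    have h3 := hmax v
    by_cases h1 : H.degree v = 1
    · obtain ⟨w3, hw3⟩ := hex3
      have := (facet_star_deg_one H hconn hF h1) w3
      omega
    by_cases h2 : H.degree v = 2
    · obtain ⟨a, b, ha, hb, hab⟩ := htri2 v h2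
      have hsub := star_subset_tri H h2.le ha hb hab
      have heq := hF.2 _ (tri_clique H ha hb hab) hsub
      have hc1 : (starF H v).card = 2 := by rw [card_starF]; exact h2
      have hc2 : (triF H v a b).card = 3 := card_triF H ha hb hab
      rw [heq, hc2] at hc1
      omega
    · omega
  intro F G hF hG
  rw [key F hF, key G hG]

lemma pure_of_deg2 (hconn : H.Connected) (hedge : H.edgeSet.Nonempty)
    (hdeg : ∀ v, H.degree v ≤ 2) : IsPure (cliqueComplex H.lineGraph) := by
  have : Nonempty V := nonempty_of_edge H hedge
  by_cases htri : ∃ a b c : V, H.Adj a b ∧ H.Adj a c ∧ H.Adj b c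
  · obtain ⟨a, b, c, hab, hac, hbc⟩ := htri
    have key : ∀ F, IsFacet (cliqueComplex H.lineGraph) F → F.card = 3 := by
      intro F hF
      rcases facet_shape H hF with ⟨a', b', c', h1, h2, h3, rfl⟩ | ⟨v, rfl⟩
      · exact card_triF H h1 h2 h3
      exfalso
      have hV : v ∈ ({a, b, c} : Set V) := by
        refine closed_eq_univ H hconn ⟨a, by simp⟩ ?_ v
        rintro z (rfl | rfl | rfl) t ht
        · rcases nbr_of_deg_two H (hdeg z) hab hac hbc.ne ht with rfl | rfl <;> simp
        · rcases nbr_of_deg_two H (hdeg z) hab.symm hbc hac.ne ht with rfl | rfl <;> simp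
        · rcases nbr_of_deg_two H (hdeg z) hac.symm hbc.symm hab.ne ht with rfl | rfl <;> simp
      have hbad : ∃ x y : V, H.Adj v x ∧ H.Adj v y ∧ H.Adj x y := by
        rcases hV with rfl | rfl | rfl
        · exact ⟨b, c, hab, hac, hbc⟩
        · exact ⟨a, c, hab.symm, hbc, hac⟩
        · exact ⟨a, b, hac.symm, hbc.symm, hab⟩
      obtain ⟨x, y, hx, hy, hxy⟩ := hbad
      have hsub := star_subset_tri H (hdeg v) hx hy hxy
      have heq := hF.2 _ (tri_clique H hx hy hxy) hsub
      have hc1 : (starF H v).card ≤ 2 := by rw [card_starF]; exact hdeg v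
      rw [heq, card_triF H hx hy hxy] at hc1
      omega
    intro F G hF hG
    rw [key F hF, key G hG]
  · intro F G hF hG
    rcases facet_shape H hF with ⟨a, b, c, h1, h2, h3, -⟩ | ⟨v, rfl⟩
    · exact absurd ⟨a, b, c, h1, h2, h3⟩ htri
    rcases facet_shape H hG with ⟨a, b, c, h1, h2, h3, -⟩ | ⟨w, rfl⟩
    · exact absurd ⟨a, b, c, h1, h2, h3⟩ htri
    rw [card_starF, card_starF]
    have hv0 := degree_pos H hconn hedge v
    have hw0 := degree_pos H hconn hedge w
    have hv2 := hdeg v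
    have hw2 := hdeg w
    by_cases h1 : H.degree v = 1
    · rw [h1, (facet_star_deg_one H hconn hF h1) w]
    by_cases h1' : H.degree w = 1
    · rw [h1', (facet_star_deg_one H hconn hG h1') v]
    omega
lemma forward_cases (hconn : H.Connected) (hedge : H.edgeSet.Nonempty)
    (hpure : IsPure (cliqueComplex H.lineGraph)) :
    (((¬ ∃ a b c : V, H.Adj a b ∧ H.Adj a c ∧ H.Adj b c) ∧
        ∃ r : ℕ, 3 < r ∧ ∀ v : V, H.degree v = 1 ∨ H.degree v = r) ∨
      ((∀ v : V, H.degree v ≤ 3) ∧ (∃ v : V, H.degree v = 3) ∧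
        ∀ v : V, H.degree v = 2 → ∃ a b : V, H.Adj v a ∧ H.Adj v b ∧ H.Adj a b) ∨
      (∀ v : V, H.degree v ≤ 2)) := by
  have : Nonempty V := nonempty_of_edge H hedge
  by_cases hd2 : ∀ v, H.degree v ≤ 2
  · exact Or.inr (Or.inr hd2)
  push_neg at hd2
  obtain ⟨v, hv3'⟩ := hd2
  have hv3 : 3 ≤ H.degree v := hv3'
  have hfv : IsFacet (cliqueComplex H.lineGraph) (starF H v) :=
    star_facet H (by omega) (Or.inr hv3)
  by_cases htri : ∃ a b c : V, H.Adj a b ∧ H.Adj a c ∧ H.Adj b c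
  · right; left
    obtain ⟨a, b, c, hab, hac, hbc⟩ := htri
    have hT := tri_facet H hab hac hbc
    have hTc := card_triF H hab hac hbc
    have hmax : ∀ w, H.degree w ≤ 3 := by
      intro w
      by_contra hw
      push_neg at hw
      have hfw : IsFacet (cliqueComplex H.lineGraph) (starF H w) :=
        star_facet H (by omega) (Or.inr (by omega))
      have := hpure _ _ hfw hT
      rw [card_starF, hTc] at this
      omega
    refine ⟨hmax, ⟨v, ?_⟩, ?_⟩
    · have := hpure _ _ hfv hT
      rw [card_starF, hTc] at this
      exact this
    · intro w hw2
      by_contra hn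
      push_neg at hn
      have hfw : IsFacet (cliqueComplex H.lineGraph) (starF H w) :=
        star_facet H (by omega) (Or.inl (fun a b ha hb _ => hn a b ha hb))
      have := hpure _ _ hfw hT
      rw [card_starF, hTc, hw2] at this
      omega
  · have hdeg : ∀ w, H.degree w = 1 ∨ H.degree w = H.degree v := by
      intro w
      have h0 := degree_pos H hconn hedge w
      by_cases h1 : H.degree w = 1
      · exact Or.inl h1
      by_cases h2 : H.degree w = 2
      · exfalso
        have hfw : IsFacet (cliqueComplex H.lineGraph) (starF H w) :=
          star_facet H (by omega)
            (Or.inl (fun a b ha hb _ hab => htri ⟨w, a, b, ha, hb, hab⟩))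
        have := hpure _ _ hfw hfv
        rw [card_starF, card_starF, h2] at this
        omega
      · have hw3 : 3 ≤ H.degree w := by omega
        have hfw : IsFacet (cliqueComplex H.lineGraph) (starF H w) :=
          star_facet H (by omega) (Or.inr hw3)
        have := hpure _ _ hfw hfv
        rw [card_starF, card_starF] at this
        exact Or.inr this
    by_cases hr4 : 4 ≤ H.degree v
    · exact Or.inl ⟨htri, H.degree v, by omega, hdeg⟩
    · have hr3 : H.degree v = 3 := by omega
      refine Or.inr (Or.inl ⟨?_, ⟨v, hr3⟩, ?_⟩)
      · intro w
        rcases hdeg w with h | h <;> omega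
      · intro w hw2
        rcases hdeg w with h | h <;> omega
lemma getVert_inj : ∀ {u w : V} (p : H.Walk u w), p.IsPath → ∀ i j : ℕ, i ≤ p.length →
    j ≤ p.length → p.getVert i = p.getVert j → i = j := by
  intro u w p
  induction p with
  | nil => intro _ i j hi hj _; simp only [SimpleGraph.Walk.length_nil] at hi hj; omega
  | @cons u v w h q ih =>
    intro hp i j hi hj heq
    rw [SimpleGraph.Walk.cons_isPath_iff] at hp
    rw [SimpleGraph.Walk.length_cons] at hi hj
    match i, j with
    | 0, 0 => rfl
    | 0, j+1 =>
      exfalso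
      rw [SimpleGraph.Walk.getVert_zero, SimpleGraph.Walk.getVert_cons_succ] at heq
      exact hp.2 (SimpleGraph.Walk.mem_support_iff_exists_getVert.2 ⟨j, heq.symm, by omega⟩)
    | i+1, 0 =>
      exfalso
      rw [SimpleGraph.Walk.getVert_zero, SimpleGraph.Walk.getVert_cons_succ] at heq
      exact hp.2 (SimpleGraph.Walk.mem_support_iff_exists_getVert.2 ⟨i, heq, by omega⟩)
    | i+1, j+1 =>
      rw [SimpleGraph.Walk.getVert_cons_succ, SimpleGraph.Walk.getVert_cons_succ] at heq
      have := ih hp.1 i j (by omega) (by omega) heq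
      omega

lemma concat_isPath {u w x : V} {p : H.Walk u w} (hp : p.IsPath) (h : H.Adj w x)
    (hx : x ∉ p.support) : (p.concat h).IsPath := by
  rw [← SimpleGraph.Walk.isPath_reverse_iff, SimpleGraph.Walk.reverse_concat]
  rw [SimpleGraph.Walk.cons_isPath_iff]
  exact ⟨hp.reverse, by rwa [SimpleGraph.Walk.support_reverse, List.mem_reverse]⟩

lemma getVert_mem_support {u w : V} (p : H.Walk u w) {i : ℕ} (hi : i ≤ p.length) :
    p.getVert i ∈ p.support :=
  SimpleGraph.Walk.mem_support_iff_exists_getVert.2 ⟨i, rfl, hi⟩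
lemma exists_maximal_path (hedge : H.edgeSet.Nonempty) :
    ∃ (u w : V) (p : H.Walk u w), p.IsPath ∧
      ∀ (u' w' : V) (q : H.Walk u' w'), q.IsPath → q.length ≤ p.length := by
  have : Nonempty V := nonempty_of_edge H hedge
  set L : Set ℕ := {l | ∃ (u w : V) (p : H.Walk u w), p.IsPath ∧ p.length = l} with hL
  have hne : L.Nonempty :=
    ⟨0, Classical.arbitrary V, Classical.arbitrary V, SimpleGraph.Walk.nil,
      SimpleGraph.Walk.IsPath.nil, rfl⟩
  have hbdd : BddAbove L := by
    refine ⟨Fintype.card V, ?_⟩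
    rintro l ⟨u, w, p, hp, rfl⟩
    have := hp.length_lt
    omega
  obtain ⟨u, w, p, hp, hl⟩ := Nat.sSup_mem hne hbdd
  exact ⟨u, w, p, hp, fun u' w' q hq => hl ▸ le_csSup hbdd ⟨u', w', q, hq, rfl⟩⟩

lemma max_path_support (hconn : H.Connected) (hdeg : ∀ v, H.degree v ≤ 2)
    {u w : V} {p : H.Walk u w} (hp : p.IsPath)
    (hmax : ∀ (u' w' : V) (q : H.Walk u' w'), q.IsPath → q.length ≤ p.length)
    (x : V) : x ∈ p.support := by
  have hend : ∀ y, H.Adj w y → y ∈ p.support := by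
    intro y hy
    by_contra hys
    have := hmax _ _ (p.concat hy) (concat_isPath H hp hy hys)
    rw [SimpleGraph.Walk.length_concat] at this
    omega
  have hstart : ∀ y, H.Adj u y → y ∈ p.support := by
    intro y hy
    by_contra hys
    have := hmax _ _ (p.reverse.concat hy)
      (concat_isPath H hp.reverse hy
        (by rwa [SimpleGraph.Walk.support_reverse, List.mem_reverse]))
    rw [SimpleGraph.Walk.length_concat, SimpleGraph.Walk.length_reverse] at this
    omega
  refine closed_eq_univ H hconn (S := {z | z ∈ p.support}) ⟨u, p.start_mem_support⟩ ?_ x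
  intro z hz t ht
  obtain ⟨k, hk_eq, hk⟩ := SimpleGraph.Walk.mem_support_iff_exists_getVert.1 hz
  subst hk_eq
  rcases Nat.eq_zero_or_pos k with rfl | hk0
  · rw [SimpleGraph.Walk.getVert_zero] at ht
    exact hstart t ht
  rcases eq_or_lt_of_le hk with rfl | hklt
  · rw [SimpleGraph.Walk.getVert_length] at ht
    exact hend t ht
  · have h1 : H.Adj (p.getVert k) (p.getVert (k-1)) := by
      have := p.adj_getVert_succ (i := k-1) (by omega)
      rw [Nat.sub_add_cancel hk0] at this
      exact this.symm
    have h2 : H.Adj (p.getVert k) (p.getVert (k+1)) := p.adj_getVert_succ hklt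
    rcases adj3 H (hdeg _) h1 h2 ht with h | h | h
    · have := getVert_inj H p hp (k-1) (k+1) (by omega) (by omega) h
      omega
    · exact h ▸ getVert_mem_support H p (i := k-1) (by omega)
    · exact h ▸ getVert_mem_support H p (i := k+1) (by omega)

lemma classify (hconn : H.Connected) (hedge : H.edgeSet.Nonempty)
    (hdeg : ∀ v, H.degree v ≤ 2) :
    ∃ n : ℕ, Nonempty (H ≃g pathGraph n) ∨ Nonempty (H ≃g cycleGraph n) := by
  obtain ⟨u, w, p, hp, hmax⟩ := exists_maximal_path H hedge
  have hsupp : ∀ x, x ∈ p.support := max_path_support H hconn hdeg hp hmax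
  have hinj : ∀ i j : ℕ, i ≤ p.length → j ≤ p.length → p.getVert i = p.getVert j → i = j :=
    getVert_inj H p hp
  have hlen1 : 1 ≤ p.length := by
    by_contra h
    push_neg at h
    obtain ⟨e, he⟩ := hedge
    obtain ⟨⟨x, y⟩, hxy⟩ := Quot.exists_rep e
    have hadj : H.Adj x y := (H.mem_edgeSet).1 (by rwa [← hxy] at he)
    have hx := hsupp x
    have hy := hsupp y
    obtain ⟨kx, hkx_eq, hkx⟩ := SimpleGraph.Walk.mem_support_iff_exists_getVert.1 hx
    obtain ⟨ky, hky_eq, hky⟩ := SimpleGraph.Walk.mem_support_iff_exists_getVert.1 hy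
    have : kx = ky := by omega
    rw [← hkx_eq, ← hky_eq, this] at hadj
    exact hadj.ne rfl
  let f : Fin (p.length + 1) → V := fun i => p.getVert i
  have hfinj : Function.Injective f := by
    intro i j hij
    exact Fin.ext (hinj i j (by omega) (by omega) hij)
  have hfbij : Function.Bijective f := by
    refine ⟨hfinj, fun x => ?_⟩
    obtain ⟨k, hk_eq, hk⟩ := SimpleGraph.Walk.mem_support_iff_exists_getVert.1 (hsupp x)
    exact ⟨⟨k, by omega⟩, hk_eq⟩
  let e : Fin (p.length + 1) ≃ V := Equiv.ofBijective f hfbij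
  by_cases hall2 : ∀ x, H.degree x = 2
  · -- CYCLE CASE
    have hwadj : H.Adj w u := by
      have h2 : 1 < (H.neighborFinset w).card := by
        rw [SimpleGraph.card_neighborFinset_eq_degree, hall2 w]
        omega
      obtain ⟨a, ha, b, hb, hne⟩ := Finset.one_lt_card.1 h2
      rw [SimpleGraph.mem_neighborFinset] at ha hb
      have hex : ∃ t, H.Adj w t ∧ t ≠ p.getVert (p.length - 1) := by
        by_cases hA : a = p.getVert (p.length - 1)
        · exact ⟨b, hb, by rw [← hA]; exact hne.symm⟩
        · exact ⟨a, ha, hA⟩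
      obtain ⟨t, htadj, htne⟩ := hex
      obtain ⟨k, hk_eq, hk⟩ := SimpleGraph.Walk.mem_support_iff_exists_getVert.1 (hsupp t)
      subst hk_eq
      have hklen : k ≠ p.length := by
        rintro rfl
        rw [SimpleGraph.Walk.getVert_length] at htadj
        exact htadj.ne rfl
      have hk1 : k ≠ p.length - 1 := fun h => htne (by rw [h])
      rcases Nat.eq_zero_or_pos k with rfl | hk0
      · rw [SimpleGraph.Walk.getVert_zero] at htadj
        exact htadj
      · exfalso
        have h1 : H.Adj (p.getVert k) (p.getVert (k-1)) := by
          have := p.adj_getVert_succ (i := k-1) (by omega)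
          rw [Nat.sub_add_cancel hk0] at this
          exact this.symm
        have h2 : H.Adj (p.getVert k) (p.getVert (k+1)) :=
          p.adj_getVert_succ (by omega)
        rcases adj3 H (hdeg _) h1 h2 htadj.symm with h | h | h
        · have := hinj (k-1) (k+1) (by omega) (by omega) h
          omega
        · have : p.getVert (k-1) = p.getVert p.length := by
            rw [h, SimpleGraph.Walk.getVert_length]
          have := hinj (k-1) p.length (by omega) le_rfl this
          omega
        · have : p.getVert (k+1) = p.getVert p.length := by
            rw [h, SimpleGraph.Walk.getVert_length]
          have := hinj (k+1) p.length (by omega) le_rfl this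
          omega
    have hlen2 : 2 ≤ p.length := by
      by_contra h
      have hl1 : p.length = 1 := by omega
      have h2 : 1 < (H.neighborFinset u).card := by
        rw [SimpleGraph.card_neighborFinset_eq_degree, hall2 u]
        omega
      obtain ⟨a, ha, b, hb, hne⟩ := Finset.one_lt_card.1 h2
      rw [SimpleGraph.mem_neighborFinset] at ha hb
      have key : ∀ c, H.Adj u c → c = w := by
        intro c hc
        obtain ⟨k, hk_eq, hk⟩ := SimpleGraph.Walk.mem_support_iff_exists_getVert.1 (hsupp c)
        rcases Nat.eq_zero_or_pos k with rfl | hk0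
        · rw [SimpleGraph.Walk.getVert_zero] at hk_eq
          exact absurd hk_eq.symm hc.ne'
        · have : k = p.length := by omega
          rw [this, SimpleGraph.Walk.getVert_length] at hk_eq
          exact hk_eq.symm
      rw [key a ha, key b hb] at hne
      exact hne rfl
    have key : ∀ i j : ℕ, i < j → j ≤ p.length → H.Adj (p.getVert i) (p.getVert j) →
        i + 1 = j ∨ (i = 0 ∧ j = p.length) := by
      intro i j hij hj hadj
      by_contra hcon
      push_neg at hcon
      rcases Nat.eq_zero_or_pos i with rfl | hi0
      · have hj1 : 0 + 1 ≠ j := hcon.1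
        have hjlt : j < p.length := lt_of_le_of_ne hj (hcon.2 rfl)
        have h1 : H.Adj (p.getVert j) (p.getVert (j-1)) := by
          have := p.adj_getVert_succ (i := j-1) (by omega)
          rw [Nat.sub_add_cancel (by omega)] at this
          exact this.symm
        have h2 : H.Adj (p.getVert j) (p.getVert (j+1)) := p.adj_getVert_succ (by omega)
        rcases adj3 H (hdeg _) h1 h2 hadj.symm with h | h | h
        · have := hinj (j-1) (j+1) (by omega) (by omega) h
          omega
        · have := hinj (j-1) 0 (by omega) (by omega) h
          omega
        · have := hinj (j+1) 0 (by omega) (by omega) h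
          omega
      · have hi1 : i + 1 ≠ j := hcon.1
        have h1 : H.Adj (p.getVert i) (p.getVert (i-1)) := by
          have := p.adj_getVert_succ (i := i-1) (by omega)
          rw [Nat.sub_add_cancel hi0] at this
          exact this.symm
        have h2 : H.Adj (p.getVert i) (p.getVert (i+1)) := p.adj_getVert_succ (by omega)
        rcases adj3 H (hdeg _) h1 h2 hadj with h | h | h
        · have := hinj (i-1) (i+1) (by omega) (by omega) h
          omega
        · have := hinj (i-1) j (by omega) (by omega) h
          omega
        · have := hinj (i+1) j (by omega) (by omega) h
          omega
    have hadjchar : ∀ i j : Fin (p.length + 1), H.Adj (f i) (f j) ↔ (j = i + 1 ∨ i = j + 1) := by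
      intro i j
      constructor
      · intro hadj
        rcases lt_trichotomy i.val j.val with hlt | heq | hlt
        · rcases key i.val j.val hlt (by omega) hadj with h | ⟨h0, hl⟩
          · left
            apply Fin.ext
            rw [Fin.val_add_one]
            have : i ≠ Fin.last p.length := by
              simp only [ne_eq, Fin.ext_iff, Fin.val_last]
              omega
            rw [if_neg this]
            omega
          · right
            apply Fin.ext
            rw [Fin.val_add_one]
            have : j = Fin.last p.length := by
              simp only [Fin.ext_iff, Fin.val_last]
              omega
            rw [if_pos this]
            omega
        · exfalso
          have hij : i = j := Fin.ext heq
          rw [hij] at hadj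
          exact hadj.ne rfl
        · rcases key j.val i.val hlt (by omega) hadj.symm with h | ⟨h0, hl⟩
          · right
            apply Fin.ext
            rw [Fin.val_add_one]
            have : j ≠ Fin.last p.length := by
              simp only [ne_eq, Fin.ext_iff, Fin.val_last]
              omega
            rw [if_neg this]
            omega
          · left
            apply Fin.ext
            rw [Fin.val_add_one]
            have : i = Fin.last p.length := by
              simp only [Fin.ext_iff, Fin.val_last]
              omega
            rw [if_pos this]
            omega
      · intro hor
        have hone : ∀ a b : Fin (p.length + 1), b = a + 1 → H.Adj (f a) (f b) := by
          intro a b hb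
          subst hb
          by_cases hA : a = Fin.last p.length
          · have hav : (a : ℕ) = p.length := by rw [hA, Fin.val_last]
            have hbv : ((a + 1 : Fin (p.length + 1)) : ℕ) = 0 := by
              rw [Fin.val_add_one, if_pos hA]
            show H.Adj (p.getVert a) (p.getVert ((a + 1 : Fin (p.length+1)) : ℕ))
            rw [hav, hbv, SimpleGraph.Walk.getVert_length, SimpleGraph.Walk.getVert_zero]
            exact hwadj
          · have hbv : ((a + 1 : Fin (p.length + 1)) : ℕ) = (a : ℕ) + 1 := by
              rw [Fin.val_add_one, if_neg hA]
            show H.Adj (p.getVert a) (p.getVert ((a + 1 : Fin (p.length+1)) : ℕ))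
            rw [hbv]
            refine p.adj_getVert_succ ?_
            have : (a : ℕ) ≠ p.length := by
              intro hc
              exact hA (by simp only [Fin.ext_iff, Fin.val_last]; exact hc)
            omega
        rcases hor with h | h
        · exact hone i j h
        · exact (hone j i h).symm
    refine ⟨p.length + 1, Or.inr ⟨SimpleGraph.Iso.symm ⟨e, ?_⟩⟩⟩
    intro i j
    show H.Adj (f i) (f j) ↔ _
    rw [hadjchar, SimpleGraph.cycleGraph_adj']
    have hval1 : ((1 : Fin (p.length + 1)) : ℕ) = 1 := by
      rw [Fin.val_one']
      exact Nat.mod_eq_of_lt (by omega)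
    constructor
    · rintro (rfl | rfl)
      · right
        rw [add_sub_cancel_left, hval1]
      · left
        rw [add_sub_cancel_left, hval1]
    · rintro (h | h)
      · right
        have h1 : i - j = 1 := Fin.ext (by rw [hval1]; exact h)
        have h2 : i = 1 + j := sub_eq_iff_eq_add.1 h1
        exact h2.trans (add_comm 1 j)
      · left
        have h1 : j - i = 1 := Fin.ext (by rw [hval1]; exact h)
        have h2 : j = 1 + i := sub_eq_iff_eq_add.1 h1
        exact h2.trans (add_comm 1 i)
  · -- PATH CASE
    obtain ⟨x0, hx0⟩ : ∃ x, H.degree x = 1 := by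
      push_neg at hall2
      obtain ⟨x, hx⟩ := hall2
      have h1 := hdeg x
      have h2 := degree_pos H hconn hedge x
      exact ⟨x, by omega⟩
    have key : ∀ i j : ℕ, i < j → j ≤ p.length → H.Adj (p.getVert i) (p.getVert j) →
        i + 1 = j := by
      intro i j hij hj hadj
      by_contra hne
      rcases Nat.eq_zero_or_pos i with rfl | hi0
      · rcases eq_or_lt_of_le hj with rfl | hjlt
        · -- Adj u w : every vertex has degree ≥ 2, contradiction with x0
          have hlenne : p.length ≠ 1 := fun hc => hne (by omega)
          have hdeg2 : 2 ≤ H.degree x0 := by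
            obtain ⟨k, hk_eq, hk⟩ := SimpleGraph.Walk.mem_support_iff_exists_getVert.1 (hsupp x0)
            subst hk_eq
            have hpair : ∃ y z, H.Adj (p.getVert k) y ∧ H.Adj (p.getVert k) z ∧ y ≠ z := by
              rcases Nat.eq_zero_or_pos k with rfl | hk0
              · refine ⟨p.getVert 1, p.getVert p.length, ?_, ?_, ?_⟩
                · exact p.adj_getVert_succ (by omega)
                · exact hadj
                · intro hcontra
                  have := hinj 1 p.length (by omega) le_rfl hcontra
                  omega
              rcases eq_or_lt_of_le hk with hklen | hklt
              · subst hklen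
                refine ⟨p.getVert (p.length - 1), p.getVert 0, ?_, ?_, ?_⟩
                · have h' := p.adj_getVert_succ (i := p.length - 1) (by omega)
                  rw [Nat.sub_add_cancel hk0] at h'
                  exact h'.symm
                · exact hadj.symm
                · intro hcontra
                  have := hinj (p.length - 1) 0 (by omega) (by omega) hcontra
                  omega
              · refine ⟨p.getVert (k-1), p.getVert (k+1), ?_, ?_, ?_⟩
                · have h' := p.adj_getVert_succ (i := k-1) (by omega)
                  rw [Nat.sub_add_cancel hk0] at h'
                  exact h'.symm
                · exact p.adj_getVert_succ hklt
                · intro hcontra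
                  have := hinj (k-1) (k+1) (by omega) (by omega) hcontra
                  omega
            obtain ⟨y, z, hy, hz, hyz⟩ := hpair
            by_contra hc
            push_neg at hc
            exact hyz (adj_eq_of_degree_le_one H (by omega) hy hz)
          omega
        · -- 0 < j < length, j ≥ 2
          have h1 : H.Adj (p.getVert j) (p.getVert (j-1)) := by
            have := p.adj_getVert_succ (i := j-1) (by omega)
            rw [Nat.sub_add_cancel (by omega)] at this
            exact this.symm
          have h2 : H.Adj (p.getVert j) (p.getVert (j+1)) := p.adj_getVert_succ (by omega)
          rcases adj3 H (hdeg _) h1 h2 hadj.symm with h | h | h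
          · have := hinj (j-1) (j+1) (by omega) (by omega) h
            omega
          · have := hinj (j-1) 0 (by omega) (by omega) h
            omega
          · have := hinj (j+1) 0 (by omega) (by omega) h
            omega
      · have h1 : H.Adj (p.getVert i) (p.getVert (i-1)) := by
          have := p.adj_getVert_succ (i := i-1) (by omega)
          rw [Nat.sub_add_cancel hi0] at this
          exact this.symm
        have h2 : H.Adj (p.getVert i) (p.getVert (i+1)) := p.adj_getVert_succ (by omega)
        rcases adj3 H (hdeg _) h1 h2 hadj with h | h | h
        · have := hinj (i-1) (i+1) (by omega) (by omega) h
          omega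
        · have := hinj (i-1) j (by omega) (by omega) h
          omega
        · have := hinj (i+1) j (by omega) (by omega) h
          omega
    refine ⟨p.length + 1, Or.inl ⟨SimpleGraph.Iso.symm ⟨e, ?_⟩⟩⟩
    intro i j
    show H.Adj (f i) (f j) ↔ _
    rw [SimpleGraph.pathGraph_adj]
    constructor
    · intro hadj
      rcases lt_trichotomy i.val j.val with hlt | heq | hlt
      · exact Or.inl (key i.val j.val hlt (by omega) hadj)
      · exfalso
        have hij : i = j := Fin.ext heq
        rw [hij] at hadj
        exact hadj.ne rfl
      · exact Or.inr (key j.val i.val hlt (by omega) hadj.symm)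
    · rintro (h | h)
      · show H.Adj (p.getVert i) (p.getVert j)
        have : (j : ℕ) = (i : ℕ) + 1 := h.symm
        rw [this]
        exact p.adj_getVert_succ (by omega)
      · show H.Adj (p.getVert i) (p.getVert j)
        have : (i : ℕ) = (j : ℕ) + 1 := h.symm
        rw [this]
        exact (p.adj_getVert_succ (by omega)).symm
lemma iso_degree_le_two {n : ℕ} {G : SimpleGraph (Fin n)} [DecidableRel G.Adj]
    (f : H ≃g G) (hG : ∀ x : Fin n, G.degree x ≤ 2) (v : V) : H.degree v ≤ 2 := by
  have heq : H.degree v = G.degree (f v) := by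
    rw [← SimpleGraph.card_neighborFinset_eq_degree, ← SimpleGraph.card_neighborFinset_eq_degree]
    refine Finset.card_bij (fun u _ => f u) ?_ ?_ ?_
    · intro a ha
      rw [SimpleGraph.mem_neighborFinset] at ha ⊢
      exact f.map_adj_iff.2 ha
    · intro a _ b _ hab
      exact f.injective hab
    · intro b hb
      rw [SimpleGraph.mem_neighborFinset] at hb
      refine ⟨f.symm b, ?_, by simp⟩
      rw [SimpleGraph.mem_neighborFinset]
      have := f.symm.map_adj_iff.2 hb
      simpa using this
  rw [heq]
  exact hG _

instance pathGraph_decAdj (n : ℕ) : DecidableRel (pathGraph n).Adj := fun _ _ =>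
  decidable_of_iff' _ SimpleGraph.pathGraph_adj

lemma pathGraph_degree_le_two (n : ℕ) (x : Fin n) : (pathGraph n).degree x ≤ 2 := by
  rw [← SimpleGraph.card_neighborFinset_eq_degree]
  have himg : ((pathGraph n).neighborFinset x).image Fin.val ⊆ {x.val + 1, x.val - 1} := by
    intro t ht
    simp only [Finset.mem_image] at ht
    obtain ⟨a, ha, rfl⟩ := ht
    rw [SimpleGraph.mem_neighborFinset, SimpleGraph.pathGraph_adj] at ha
    simp only [Finset.mem_insert, Finset.mem_singleton]
    omega
  have h1 := Finset.card_le_card himg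
  rw [Finset.card_image_of_injective _ Fin.val_injective] at h1
  have h2 := Finset.card_insert_le (x.val + 1) ({x.val - 1} : Finset ℕ)
  rw [Finset.card_singleton] at h2
  omega

lemma cycleGraph_degree_le_two (n : ℕ) (x : Fin n) : (cycleGraph n).degree x ≤ 2 := by
  match n, x with
  | 0, x => exact x.elim0
  | 1, x =>
    rw [← SimpleGraph.card_neighborFinset_eq_degree]
    have hemp : (cycleGraph 1).neighborFinset x = ∅ := by
      rw [Finset.eq_empty_iff_forall_notMem]
      intro y hy
      rw [SimpleGraph.mem_neighborFinset] at hy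
      exact SimpleGraph.cycleGraph_one_adj hy
    rw [hemp]
    simp
  | n + 2, x =>
    rw [SimpleGraph.cycleGraph_degree_two_le]
    have h2 := Finset.card_insert_le (x - 1) ({x + 1} : Finset (Fin (n+2)))
    rw [Finset.card_singleton] at h2
    omega

lemma pure_of_case3 (hconn : H.Connected) (hedge : H.edgeSet.Nonempty) {n : ℕ}
    (h : Nonempty (H ≃g pathGraph n) ∨ Nonempty (H ≃g cycleGraph n)) :
    IsPure (cliqueComplex H.lineGraph) := by
  apply pure_of_deg2 H hconn hedge
  rcases h with hp | hc
  · obtain ⟨f⟩ := hp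
    exact fun v => iso_degree_le_two H f (pathGraph_degree_le_two n) v
  · obtain ⟨f⟩ := hc
    exact fun v => iso_degree_le_two H f (cycleGraph_degree_le_two n) v
end Aux


/-- purity of the clique complex of a line graph. -/
theorem stmt0 {V : Type} [DecidableEq V] [Fintype V] (H : SimpleGraph V) [DecidableRel H.Adj]
    (hconn : H.Connected) (hedge : H.edgeSet.Nonempty) :
    IsPure (cliqueComplex (SimpleGraph.lineGraph H)) ↔
      (((¬ ∃ a b c : V, H.Adj a b ∧ H.Adj a c ∧ H.Adj b c) ∧
        ∃ r : ℕ, 3 < r ∧ ∀ v : V, H.degree v = 1 ∨ H.degree v = r) ∨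
      ((∀ v : V, H.degree v ≤ 3) ∧ (∃ v : V, H.degree v = 3) ∧
        ∀ v : V, H.degree v = 2 → ∃ a b : V, H.Adj v a ∧ H.Adj v b ∧ H.Adj a b) ∨
      (∃ n : ℕ, Nonempty (H ≃g pathGraph n) ∨ Nonempty (H ≃g cycleGraph n))) := by
  constructor
  · intro hpure
    rcases forward_cases H hconn hedge hpure with h | h | h
    · exact Or.inl h
    · exact Or.inr (Or.inl h)
    · exact Or.inr (Or.inr (classify H hconn hedge h))
  · rintro (⟨htf, r, hr, hdeg⟩ | ⟨hmax, hex3, htri2⟩ | ⟨n, hiso⟩)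
    · exact pure_of_case1 H hconn hedge htf (by omega) hdeg
    · exact pure_of_case2 H hconn hedge hmax hex3 htri2
    · exact pure_of_case3 H hconn hedge hiso
end

section
/- Let C be a simple graph in which no two vertices of degree 1 are adjacent unless C is a single edge, and let Δ = ⟨E(C)⟩. A vertex v of Δ (i.e., a non-isolated vertex of C) is a shedding vertex of Δ if and only if v has no neighbor of degree 1 in C. -/
open Finset SimpleGraph

variable {V : Type*} [DecidableEq V]

/-- The complex generated by the edges of a graph. -/
def edgeComplex {V : Type} [DecidableEq V] (C : SimpleGraph V) : Set (Finset V) :=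
  {F | ∃ a b : V, C.Adj a b ∧ F ⊆ ({a, b} : Finset V)}

theorem stmt3 {V : Type} [DecidableEq V] [Fintype V] (C : SimpleGraph V) [DecidableRel C.Adj]
    (h : (∀ a b : V, C.Adj a b → ¬(C.degree a = 1 ∧ C.degree b = 1)) ∨
         (∃ a b : V, C.Adj a b ∧ C.edgeSet = {s(a, b)}))
    (v : V) (hv : ∃ w : V, C.Adj v w) :
    IsSheddingVertex (edgeComplex C) v ↔ ∀ w : V, C.Adj v w → C.degree w ≠ 1 := by
  obtain ⟨w₀, hw₀⟩ := hv
  constructor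
  · rintro ⟨-, hshed⟩ w hadj hdeg
    have hvw : v ∈ C.neighborFinset w := by simp [hadj.symm]
    have hnb : C.neighborFinset w = {v} := by
      obtain ⟨x, hx⟩ := Finset.card_eq_one.mp hdeg
      rw [hx] at hvw ⊢
      simp_all
    refine hshed {w} ⟨by simp [hadj.ne], ⟨v, w, hadj, Finset.Subset.refl _⟩⟩
      ⟨⟨⟨w, v, hadj.symm, by simp⟩, by simp [hadj.ne]⟩, ?_⟩
    rintro G ⟨⟨a, b, hab, hG⟩, hvG⟩ hwG
    apply Finset.Subset.antisymm hwG
    intro x hx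
    simp only [Finset.mem_singleton]
    by_contra hxw
    have hwab := hG (hwG (Finset.mem_singleton_self w))
    have hxab := hG hx
    have hwx : C.Adj w x := by
      simp only [Finset.mem_insert, Finset.mem_singleton] at hwab hxab
      rcases hwab with rfl | rfl
      · rcases hxab with rfl | rfl
        · exact absurd rfl hxw
        · exact hab
      · rcases hxab with rfl | rfl
        · exact hab.symm
        · exact absurd rfl hxw
    have : x ∈ C.neighborFinset w := by simp [hwx]
    rw [hnb] at this
    simp only [Finset.mem_singleton] at this
    exact hvG (this ▸ hx)
  · intro hdeg
    refine ⟨⟨v, w₀, hw₀, by simp⟩, ?_⟩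
    rintro F ⟨hvF, a, b, hab, hsub⟩ hfac
    have hva : v ∈ ({a, b} : Finset V) := hsub (by simp)
    have key : ∃ w, C.Adj v w ∧ F ⊆ {w} := by
      simp only [Finset.mem_insert, Finset.mem_singleton] at hva
      have hF : ∀ x ∈ F, x = a ∨ x = b := fun x hx => by
        have := hsub (Finset.mem_insert_of_mem hx)
        simpa using this
      rcases hva with rfl | rfl
      · refine ⟨b, hab, fun x hx => ?_⟩
        rcases hF x hx with rfl | rfl
        · exact absurd hx hvF
        · simp
      · refine ⟨a, hab.symm, fun x hx => ?_⟩
        rcases hF x hx with rfl | rfl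
        · simp
        · exact absurd hx hvF
    obtain ⟨w, hvw, hFw⟩ := key
    rcases Finset.subset_singleton_iff.mp hFw with rfl | rfl
    · have := hfac.2 {w₀} ⟨⟨w₀, v, hw₀.symm, by simp⟩,
        Finset.notMem_singleton.mpr hw₀.ne⟩ (Finset.empty_subset _)
      exact absurd this.symm (Finset.singleton_ne_empty w₀)
    · have h1 : 1 < (C.neighborFinset w).card := by
        rcases Nat.lt_or_ge (C.neighborFinset w).card 2 with h1 | h1
        · interval_cases h2 : (C.neighborFinset w).card
          · simp only [Finset.card_eq_zero] at h2
            have : v ∈ C.neighborFinset w := by simp [hvw.symm]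
            simp [h2] at this
          · exact absurd h2 (hdeg w hvw)
        · exact h1
      obtain ⟨x, hxmem, hxv⟩ := Finset.exists_mem_ne h1 v
      have hwx : C.Adj w x := by simpa using hxmem
      have heq := hfac.2 {w, x} ⟨⟨w, x, hwx, Finset.Subset.refl _⟩, by
        simp only [Finset.mem_insert, Finset.mem_singleton]
        rintro (rfl | rfl)
        · exact hvw.ne rfl
        · exact hxv rfl⟩ (by simp)
      have : x ∈ ({w} : Finset V) := heq ▸ (by simp : x ∈ ({w, x} : Finset V))
      simp only [Finset.mem_singleton] at this
      exact hwx.ne this.symm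
end

section
/- Let Γ be a connected simplicial complex, a a vertex of Γ, and b a vertex not in Γ. Then Γ is vertex decomposable if and only if Γ + ⟨{a,b}⟩ (the complex obtained by adding the facet {a,b}) is vertex decomposable. -/
open Finset SimpleGraph

variable {V : Type*} [DecidableEq V]

/-- The vertex set of a complex. -/
def vertices {V : Type} [DecidableEq V] (K : Set (Finset V)) : Set V :=
  {v | ({v} : Finset V) ∈ K}

/-- A complex is connected. -/
def ComplexConnected {V : Type} [DecidableEq V] (K : Set (Finset V)) : Prop :=
  (vertices K).Nonempty ∧ ∀ v ∈ vertices K, ∀ w ∈ vertices K,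
    Relation.ReflTransGen (fun x y => ∃ F ∈ K, x ∈ F ∧ y ∈ F) v w

/-- Adding a new facet `F` to a complex. -/
def addFace {V : Type} [DecidableEq V] (K : Set (Finset V)) (F : Finset V) :
    Set (Finset V) :=
  K ∪ {G | G ⊆ F}

section Stmt5Aux

variable {V : Type} [DecidableEq V]

lemma isComplex_del {K : Set (Finset V)} (hK : IsComplex K) (v : V) :
    IsComplex (del K v) := by
  refine ⟨⟨hK.1, Finset.notMem_empty v⟩, ?_⟩
  intro F hF G hG
  exact ⟨hK.2 F hF.1 G hG, fun h => hF.2 (hG h)⟩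

lemma subset_pair_of_not_right {F : Finset V} {a b : V}
    (h : F ⊆ ({a, b} : Finset V)) (hb : b ∉ F) : F ⊆ {a} := by
  intro z hz
  rcases Finset.mem_insert.1 (h hz) with rfl | h'
  · exact Finset.mem_singleton_self z
  · rw [Finset.mem_singleton] at h'
    subst h'
    exact absurd hz hb

lemma subset_pair_of_not_left {F : Finset V} {a b : V}
    (h : F ⊆ ({a, b} : Finset V)) (ha : a ∉ F) : F ⊆ {b} := by
  intro z hz
  rcases Finset.mem_insert.1 (h hz) with rfl | h'
  · exact absurd hz ha
  · exact h'

lemma delb_eq {K : Set (Finset V)} (hK : IsComplex K) {a b : V}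
    (ha : ({a} : Finset V) ∈ K) (hb : ∀ F ∈ K, b ∉ F) :
    del (K ∪ {G | G ⊆ ({a, b} : Finset V)}) b = K := by
  ext F
  constructor
  · rintro ⟨hF | hF, hbF⟩
    · exact hF
    · rcases Finset.subset_singleton_iff.1 (subset_pair_of_not_right hF hbF) with rfl | rfl
      · exact hK.1
      · exact ha
  · intro hF
    exact ⟨Or.inl hF, hb F hF⟩

/-- Removing an isolated vertex preserves vertex decomposability. -/
lemma lemB : ∀ {M : Set (Finset V)}, VertexDecomposable M →
    ∀ (L : Set (Finset V)) (b : V), IsComplex L → (∀ F ∈ L, b ∉ F) →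
    M = L ∪ {G | G ⊆ ({b} : Finset V)} → VertexDecomposable L := by
  intro M hM
  induction hM with
  | simplex N hs =>
    intro L b hL hbL hMeq
    obtain ⟨F, rfl⟩ := hs
    refine .simplex _ ⟨F.erase b, ?_⟩
    ext G
    constructor
    · intro hG
      have hGF : G ∈ {G : Finset V | G ⊆ F} := by rw [hMeq]; exact Or.inl hG
      show G ⊆ F.erase b
      exact Finset.subset_erase.2 ⟨hGF, hbL G hG⟩
    · intro hG
      have hG' : G ⊆ F.erase b := hG
      have hGF : G ∈ {G : Finset V | G ⊆ F} := hG'.trans (Finset.erase_subset _ _)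
      rw [hMeq] at hGF
      rcases hGF with h | h
      · exact h
      · have hbG : b ∉ G := fun hbG => (Finset.mem_erase.1 (hG' hbG)).1 rfl
        have h' : G ⊆ ({b} : Finset V) := h
        rcases Finset.subset_singleton_iff.1 h' with rfl | rfl
        · exact hL.1
        · exact absurd (Finset.mem_singleton_self b) hbG
  | shed N v hv hlink hdel ihl ihd =>
    intro L b hL hbL hMeq
    subst hMeq
    by_cases hvb : v = b
    · subst hvb
      have heq : del (L ∪ {G | G ⊆ ({v} : Finset V)}) v = L := by
        ext F
        constructor
        · rintro ⟨hF | hF, hvF⟩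
          · exact hF
          · have h' : F ⊆ ({v} : Finset V) := hF
            rcases Finset.subset_singleton_iff.1 h' with rfl | rfl
            · exact hL.1
            · exact absurd (Finset.mem_singleton_self v) hvF
        · intro hF
          exact ⟨Or.inl hF, hbL F hF⟩
      rw [heq] at hdel
      exact hdel
    · have hvL : ({v} : Finset V) ∈ L := by
        rcases hv.1 with h | h
        · exact h
        · have h' : ({v} : Finset V) ⊆ {b} := h
          exact absurd (Finset.mem_singleton.1 (h' (Finset.mem_singleton_self v))) hvb
      have hlinkeq : link (L ∪ {G | G ⊆ ({b} : Finset V)}) v = link L v := by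
        ext F
        constructor
        · rintro ⟨hvF, hF | hF⟩
          · exact ⟨hvF, hF⟩
          · have h' : insert v F ⊆ ({b} : Finset V) := hF
            exact absurd (Finset.mem_singleton.1 (h' (Finset.mem_insert_self v F))) hvb
        · rintro ⟨hvF, hF⟩
          exact ⟨hvF, Or.inl hF⟩
      have hdeleq : del (L ∪ {G | G ⊆ ({b} : Finset V)}) v
          = del L v ∪ {G | G ⊆ ({b} : Finset V)} := by
        ext F
        constructor
        · rintro ⟨hF | hF, hvF⟩
          · exact Or.inl ⟨hF, hvF⟩
          · exact Or.inr hF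
        · rintro (⟨hF, hvF⟩ | hF)
          · exact ⟨Or.inl hF, hvF⟩
          · have h' : F ⊆ ({b} : Finset V) := hF
            exact ⟨Or.inr hF, fun hvF => hvb (Finset.mem_singleton.1 (h' hvF))⟩
      have hdL : VertexDecomposable (del L v) :=
        ihd (del L v) b (isComplex_del hL v) (fun F hF => hbL F hF.1) hdeleq
      have hlL : VertexDecomposable (link L v) := by rw [← hlinkeq]; exact hlink
      by_cases hsimp : L = {G | G ⊆ ({v} : Finset V)}
      · exact .simplex _ ⟨{v}, hsimp⟩
      · refine .shed L v ⟨hvL, ?_⟩ hlL hdL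
        intro F hF hfac
        by_cases hFe : F = ∅
        · subst hFe
          apply hsimp
          ext G
          constructor
          · intro hG
            show G ⊆ {v}
            intro z hz
            rw [Finset.mem_singleton]
            by_contra hzv
            have hz' : ({z} : Finset V) ∈ del L v :=
              ⟨hL.2 G hG {z} (Finset.singleton_subset_iff.2 hz),
               fun h => hzv (Finset.mem_singleton.1 h).symm⟩
            exact Finset.singleton_ne_empty z (hfac.2 {z} hz' (Finset.empty_subset _)).symm
          · intro hG
            have hG' : G ⊆ ({v} : Finset V) := hG
            rcases Finset.subset_singleton_iff.1 hG' with rfl | rfl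
            · exact hL.1
            · exact hvL
        · have hbF : b ∉ F := fun h => hbL _ hF.2 (Finset.mem_insert_of_mem h)
          apply hv.2 F (by rw [hlinkeq]; exact hF)
          rw [hdeleq]
          refine ⟨Or.inl hfac.1, ?_⟩
          rintro G (hG | hG) hFG
          · exact hfac.2 G hG hFG
          · have hG' : G ⊆ ({b} : Finset V) := hG
            rcases Finset.subset_singleton_iff.1 (hFG.trans hG') with h | h
            · exact absurd h hFe
            · subst h
              exact absurd (Finset.mem_singleton_self b) hbF

/-- Replacing the free tip of a whisker by another fresh vertex preserves VD. -/
lemma swap2 : ∀ {M : Set (Finset V)}, VertexDecomposable M →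
    ∀ (K₀ : Set (Finset V)) (x y y' : V), IsComplex K₀ →
    (∀ F ∈ K₀, x ∉ F) → (∀ F ∈ K₀, y ∉ F) → (∀ F ∈ K₀, y' ∉ F) →
    y ≠ x → y' ≠ x →
    M = {G | G ⊆ ({x, y} : Finset V)} ∪ K₀ →
    VertexDecomposable ({G | G ⊆ ({x, y'} : Finset V)} ∪ K₀) := by
  intro M hM
  induction hM with
  | simplex N hs =>
    intro K₀ x y y' hK₀ hx hy hy' hyx hy'x hMeq
    obtain ⟨F, rfl⟩ := hs
    have hxyF : ({x, y} : Finset V) ⊆ F := by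
      have h1 : ({x, y} : Finset V) ∈ {G : Finset V | G ⊆ F} := by
        rw [hMeq]; exact Or.inl (Finset.Subset.refl _)
      exact h1
    have hK₀sub : ∀ G ∈ K₀, G = ∅ := by
      intro G hG
      have h1 : G ∈ {G : Finset V | G ⊆ F} := by rw [hMeq]; exact Or.inr hG
      have h2 : G ⊆ F := h1
      have hFxy : F ⊆ ({x, y} : Finset V) := by
        intro c hc
        have h3 : ({x, c} : Finset V) ∈ {G : Finset V | G ⊆ F} := by
          show ({x, c} : Finset V) ⊆ F
          exact Finset.insert_subset_iff.2
            ⟨hxyF (Finset.mem_insert_self x {y}), Finset.singleton_subset_iff.2 hc⟩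
        rw [hMeq] at h3
        rcases h3 with h3 | h3
        · have h3' : ({x, c} : Finset V) ⊆ ({x, y} : Finset V) := h3
          exact h3' (Finset.mem_insert_of_mem (Finset.mem_singleton_self c))
        · exact absurd (Finset.mem_insert_self x {c}) (hx _ h3)
      rw [Finset.eq_empty_iff_forall_notMem]
      intro z hz
      rcases Finset.mem_insert.1 (hFxy (h2 hz)) with rfl | h4
      · exact hx G hG hz
      · rw [Finset.mem_singleton] at h4
        subst h4
        exact hy G hG hz
    refine .simplex _ ⟨{x, y'}, ?_⟩
    ext G
    constructor
    · rintro (hG | hG)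
      · exact hG
      · show G ⊆ ({x, y'} : Finset V)
        rw [hK₀sub G hG]
        exact Finset.empty_subset _
    · intro hG
      exact Or.inl hG
  | shed N v hv hlink hdel ihl ihd =>
    intro K₀ x y y' hK₀ hx hy hy' hyx hy'x hMeq
    subst hMeq
    have hvx : v ≠ x := by
      rintro rfl
      apply hv.2 {y}
      · exact ⟨fun h => hyx (Finset.mem_singleton.1 h).symm, Or.inl (Finset.Subset.refl _)⟩
      · constructor
        · exact ⟨Or.inl (Finset.singleton_subset_iff.2
            (Finset.mem_insert_of_mem (Finset.mem_singleton_self y))),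
            fun h => hyx (Finset.mem_singleton.1 h).symm⟩
        · rintro G ⟨hG | hG, hvG⟩ hFG
          · have hG' : G ⊆ ({v, y} : Finset V) := hG
            exact Finset.Subset.antisymm hFG (subset_pair_of_not_left hG' hvG)
          · exact absurd (hFG (Finset.mem_singleton_self y)) (hy G hG)
    have hvy : v ≠ y := by
      rintro rfl
      apply hv.2 {x}
      · refine ⟨fun h => hyx (Finset.mem_singleton.1 h), Or.inl ?_⟩
        intro z hz
        rcases Finset.mem_insert.1 hz with rfl | h'
        · exact Finset.mem_insert_of_mem (Finset.mem_singleton_self z)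
        · rw [Finset.mem_singleton] at h'
          subst h'
          exact Finset.mem_insert_self z _
      · constructor
        · exact ⟨Or.inl (Finset.singleton_subset_iff.2 (Finset.mem_insert_self x {v})),
            fun h => hyx (Finset.mem_singleton.1 h)⟩
        · rintro G ⟨hG | hG, hvG⟩ hFG
          · have hG' : G ⊆ ({x, v} : Finset V) := hG
            exact Finset.Subset.antisymm hFG (subset_pair_of_not_right hG' hvG)
          · exact absurd (hFG (Finset.mem_singleton_self x)) (hx G hG)
    have hvK₀ : ({v} : Finset V) ∈ K₀ := by
      rcases hv.1 with h | h
      · have h' : ({v} : Finset V) ⊆ {x, y} := h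
        rcases Finset.mem_insert.1 (h' (Finset.mem_singleton_self v)) with h'' | h''
        · exact absurd h'' hvx
        · exact absurd (Finset.mem_singleton.1 h'') hvy
      · exact h
    have hvy' : v ≠ y' := fun h => hy' _ hvK₀ (by rw [← h]; exact Finset.mem_singleton_self v)
    have hlinkM : link ({G | G ⊆ ({x, y} : Finset V)} ∪ K₀) v = link K₀ v := by
      ext F
      constructor
      · rintro ⟨hvF, hF | hF⟩
        · have h' : insert v F ⊆ ({x, y} : Finset V) := hF
          rcases Finset.mem_insert.1 (h' (Finset.mem_insert_self v F)) with h'' | h''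
          · exact absurd h'' hvx
          · exact absurd (Finset.mem_singleton.1 h'') hvy
        · exact ⟨hvF, hF⟩
      · rintro ⟨hvF, hF⟩
        exact ⟨hvF, Or.inr hF⟩
    have hlinkN : link ({G | G ⊆ ({x, y'} : Finset V)} ∪ K₀) v = link K₀ v := by
      ext F
      constructor
      · rintro ⟨hvF, hF | hF⟩
        · have h' : insert v F ⊆ ({x, y'} : Finset V) := hF
          rcases Finset.mem_insert.1 (h' (Finset.mem_insert_self v F)) with h'' | h''
          · exact absurd h'' hvx
          · exact absurd (Finset.mem_singleton.1 h'') hvy'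
        · exact ⟨hvF, hF⟩
      · rintro ⟨hvF, hF⟩
        exact ⟨hvF, Or.inr hF⟩
    have hdelM : del ({G | G ⊆ ({x, y} : Finset V)} ∪ K₀) v
        = {G | G ⊆ ({x, y} : Finset V)} ∪ del K₀ v := by
      ext F
      constructor
      · rintro ⟨hF | hF, hvF⟩
        · exact Or.inl hF
        · exact Or.inr ⟨hF, hvF⟩
      · rintro (hF | ⟨hF, hvF⟩)
        · have h' : F ⊆ ({x, y} : Finset V) := hF
          refine ⟨Or.inl hF, fun hvF => ?_⟩
          rcases Finset.mem_insert.1 (h' hvF) with h'' | h''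
          · exact hvx h''
          · exact hvy (Finset.mem_singleton.1 h'')
        · exact ⟨Or.inr hF, hvF⟩
    have hdelN : del ({G | G ⊆ ({x, y'} : Finset V)} ∪ K₀) v
        = {G | G ⊆ ({x, y'} : Finset V)} ∪ del K₀ v := by
      ext F
      constructor
      · rintro ⟨hF | hF, hvF⟩
        · exact Or.inl hF
        · exact Or.inr ⟨hF, hvF⟩
      · rintro (hF | ⟨hF, hvF⟩)
        · have h' : F ⊆ ({x, y'} : Finset V) := hF
          refine ⟨Or.inl hF, fun hvF => ?_⟩
          rcases Finset.mem_insert.1 (h' hvF) with h'' | h''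
          · exact hvx h''
          · exact hvy' (Finset.mem_singleton.1 h'')
        · exact ⟨Or.inr hF, hvF⟩
    have hdN : VertexDecomposable (del ({G | G ⊆ ({x, y'} : Finset V)} ∪ K₀) v) := by
      rw [hdelN]
      exact ihd (del K₀ v) x y y' (isComplex_del hK₀ v) (fun F hF => hx F hF.1)
        (fun F hF => hy F hF.1) (fun F hF => hy' F hF.1) hyx hy'x hdelM
    have hlN : VertexDecomposable (link ({G | G ⊆ ({x, y'} : Finset V)} ∪ K₀) v) := by
      rw [hlinkN, ← hlinkM]
      exact hlink
    refine .shed _ v ⟨Or.inr hvK₀, ?_⟩ hlN hdN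
    intro F hF hfac
    have hFK₀l : F ∈ link K₀ v := by rw [← hlinkN]; exact hF
    have hFK₀ : F ∈ K₀ := hK₀.2 _ hFK₀l.2 F (Finset.subset_insert _ _)
    have hvF : v ∉ F := hFK₀l.1
    have hnf : ¬ IsFacet (del ({G | G ⊆ ({x, y} : Finset V)} ∪ K₀) v) F :=
      hv.2 F (by rw [hlinkM]; exact hFK₀l)
    have hex : ∃ G ∈ del ({G | G ⊆ ({x, y} : Finset V)} ∪ K₀) v, F ⊆ G ∧ F ≠ G := by
      by_contra hco
      push_neg at hco
      exact hnf ⟨⟨Or.inr hFK₀, hvF⟩, fun G hG hFG => (hco G hG hFG)⟩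
    obtain ⟨G, hG, hFG, hne⟩ := hex
    obtain ⟨hG1, hvG⟩ := hG
    rcases hG1 with hGp | hGK₀
    · have hGp' : G ⊆ ({x, y} : Finset V) := hGp
      have hFe : F = ∅ := by
        rw [Finset.eq_empty_iff_forall_notMem]
        intro z hz
        rcases Finset.mem_insert.1 (hGp' (hFG hz)) with rfl | h''
        · exact hx F hFK₀ hz
        · rw [Finset.mem_singleton] at h''
          subst h''
          exact hy F hFK₀ hz
      subst hFe
      have hxmem : ({x} : Finset V) ∈ del ({G | G ⊆ ({x, y'} : Finset V)} ∪ K₀) v :=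
        ⟨Or.inl (Finset.singleton_subset_iff.2 (Finset.mem_insert_self x {y'})),
         fun h => hvx (Finset.mem_singleton.1 h)⟩
      exact Finset.singleton_ne_empty x (hfac.2 {x} hxmem (Finset.empty_subset _)).symm
    · have hGN : G ∈ del ({G | G ⊆ ({x, y'} : Finset V)} ∪ K₀) v := ⟨Or.inr hGK₀, hvG⟩
      exact hne (hfac.2 G hGN hFG)

end Stmt5Aux
section Stmt5Rev

variable {V : Type} [DecidableEq V]

/-- Reverse direction: removing a whisker preserves vertex decomposability. -/
lemma revWhisker : ∀ {M : Set (Finset V)}, VertexDecomposable M →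
    ∀ (K : Set (Finset V)) (a b : V), IsComplex K → ({a} : Finset V) ∈ K →
    (∀ F ∈ K, b ∉ F) → M = K ∪ {G | G ⊆ ({a, b} : Finset V)} →
    VertexDecomposable K := by
  intro M hM
  induction hM with
  | simplex N hs =>
    intro K a b hK ha hb hMeq
    obtain ⟨F, rfl⟩ := hs
    refine .simplex _ ⟨F.erase b, ?_⟩
    ext G
    constructor
    · intro hG
      have hGF : G ∈ {G : Finset V | G ⊆ F} := by rw [hMeq]; exact Or.inl hG
      show G ⊆ F.erase b
      exact Finset.subset_erase.2 ⟨hGF, hb G hG⟩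
    · intro hG
      have hG' : G ⊆ F.erase b := hG
      have hGF : G ∈ {G : Finset V | G ⊆ F} := hG'.trans (Finset.erase_subset _ _)
      rw [hMeq] at hGF
      rcases hGF with h | h
      · exact h
      · have hbG : b ∉ G := fun hbG => (Finset.mem_erase.1 (hG' hbG)).1 rfl
        have h' : G ⊆ ({a, b} : Finset V) := h
        rcases Finset.subset_singleton_iff.1 (subset_pair_of_not_right h' hbG) with rfl | rfl
        · exact hK.1
        · exact ha
  | shed N v hshed hlinkVD hdelVD ihl ihd =>
    intro K a b hK ha hb hMeq
    subst hMeq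
    have hba : b ≠ a := fun h => hb {a} ha (by rw [h]; exact Finset.mem_singleton_self a)
    by_cases hvb : v = b
    · subst hvb
      rw [delb_eq hK ha hb] at hdelVD
      exact hdelVD
    by_cases hva : v = a
    · subst hva
      -- case: the shedding vertex is `a`
      have hlinkeq : link (K ∪ {G | G ⊆ ({v, b} : Finset V)}) v
          = link K v ∪ {G | G ⊆ ({b} : Finset V)} := by
        ext F
        constructor
        · rintro ⟨hvF, hins | hins⟩
          · exact Or.inl ⟨hvF, hins⟩
          · have h' : insert v F ⊆ ({v, b} : Finset V) := hins
            exact Or.inr (subset_pair_of_not_left ((Finset.subset_insert v F).trans h') hvF)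
        · rintro (⟨hvF, hins⟩ | hF)
          · exact ⟨hvF, Or.inl hins⟩
          · have hF' : F ⊆ ({b} : Finset V) := hF
            refine ⟨fun hvF => hba (Finset.mem_singleton.1 (hF' hvF)).symm, Or.inr ?_⟩
            show insert v F ⊆ ({v, b} : Finset V)
            exact Finset.insert_subset_iff.2 ⟨Finset.mem_insert_self v {b},
              hF'.trans (Finset.singleton_subset_iff.2
                (Finset.mem_insert_of_mem (Finset.mem_singleton_self b)))⟩
      have hdeleqa : del (K ∪ {G | G ⊆ ({v, b} : Finset V)}) v
          = del K v ∪ {G | G ⊆ ({b} : Finset V)} := by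
        ext F
        constructor
        · rintro ⟨hF | hF, hvF⟩
          · exact Or.inl ⟨hF, hvF⟩
          · have h' : F ⊆ ({v, b} : Finset V) := hF
            exact Or.inr (subset_pair_of_not_left h' hvF)
        · rintro (⟨hF, hvF⟩ | hF)
          · exact ⟨Or.inl hF, hvF⟩
          · have hF' : F ⊆ ({b} : Finset V) := hF
            refine ⟨Or.inr (hF'.trans (Finset.singleton_subset_iff.2
              (Finset.mem_insert_of_mem (Finset.mem_singleton_self b)))),
              fun hvF => hba (Finset.mem_singleton.1 (hF' hvF)).symm⟩
      have hlinkKa_complex : IsComplex (link K v) := by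
        constructor
        · exact ⟨Finset.notMem_empty v, by simpa using ha⟩
        · intro F hF G hG
          exact ⟨fun h => hF.1 (hG h), hK.2 _ hF.2 _ (Finset.insert_subset_insert v hG)⟩
      have hl : VertexDecomposable (link K v) :=
        lemB hlinkVD (link K v) b hlinkKa_complex
          (fun F hF hbF => hb _ hF.2 (Finset.mem_insert_of_mem hbF)) hlinkeq
      have hd : VertexDecomposable (del K v) :=
        lemB hdelVD (del K v) b (isComplex_del hK v) (fun F hF => hb F hF.1) hdeleqa
      by_cases hKs : K = {G | G ⊆ ({v} : Finset V)}
      · exact .simplex _ ⟨{v}, hKs⟩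
      · refine .shed K v ⟨ha, ?_⟩ hl hd
        intro F hF hfac
        by_cases hFe : F = ∅
        · subst hFe
          apply hKs
          ext G
          constructor
          · intro hG
            show G ⊆ {v}
            intro z hz
            rw [Finset.mem_singleton]
            by_contra hza
            have hz' : ({z} : Finset V) ∈ del K v :=
              ⟨hK.2 G hG {z} (Finset.singleton_subset_iff.2 hz),
               fun h => hza (Finset.mem_singleton.1 h).symm⟩
            exact Finset.singleton_ne_empty z (hfac.2 {z} hz' (Finset.empty_subset _)).symm
          · intro hG
            have hG' : G ⊆ ({v} : Finset V) := hG
            rcases Finset.subset_singleton_iff.1 hG' with rfl | rfl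
            · exact hK.1
            · exact ha
        · have hbF : b ∉ F := fun h => hb _ hF.2 (Finset.mem_insert_of_mem h)
          apply hshed.2 F (by rw [hlinkeq]; exact Or.inl hF)
          rw [hdeleqa]
          refine ⟨Or.inl hfac.1, ?_⟩
          rintro G (hG | hG) hFG
          · exact hfac.2 G hG hFG
          · have hG' : G ⊆ ({b} : Finset V) := hG
            rcases Finset.subset_singleton_iff.1 (hFG.trans hG') with h | h
            · exact absurd h hFe
            · subst h
              exact absurd (Finset.mem_singleton_self b) hbF
    · -- case: v ∉ {a, b}
      have hvK : ({v} : Finset V) ∈ K := by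
        rcases hshed.1 with h | h
        · exact h
        · have h' : ({v} : Finset V) ⊆ ({a, b} : Finset V) := h
          rcases Finset.mem_insert.1 (h' (Finset.mem_singleton_self v)) with h'' | h''
          · exact absurd h'' hva
          · exact absurd (Finset.mem_singleton.1 h'') hvb
      have hlinkeq : link (K ∪ {G | G ⊆ ({a, b} : Finset V)}) v = link K v := by
        ext F
        constructor
        · rintro ⟨hvF, hins | hins⟩
          · exact ⟨hvF, hins⟩
          · have h' : insert v F ⊆ ({a, b} : Finset V) := hins
            rcases Finset.mem_insert.1 (h' (Finset.mem_insert_self v F)) with h'' | h''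
            · exact absurd h'' hva
            · exact absurd (Finset.mem_singleton.1 h'') hvb
        · rintro ⟨hvF, hins⟩
          exact ⟨hvF, Or.inl hins⟩
      have hdeleq : del (K ∪ {G | G ⊆ ({a, b} : Finset V)}) v
          = del K v ∪ {G | G ⊆ ({a, b} : Finset V)} := by
        ext F
        constructor
        · rintro ⟨hF | hF, hvF⟩
          · exact Or.inl ⟨hF, hvF⟩
          · exact Or.inr hF
        · rintro (⟨hF, hvF⟩ | hF)
          · exact ⟨Or.inl hF, hvF⟩
          · have h' : F ⊆ ({a, b} : Finset V) := hF
            refine ⟨Or.inr hF, fun hvF => ?_⟩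
            rcases Finset.mem_insert.1 (h' hvF) with h'' | h''
            · exact hva h''
            · exact hvb (Finset.mem_singleton.1 h'')
      have hav : a ≠ v := fun h => hva h.symm
      have hdKv : VertexDecomposable (del K v) :=
        ihd (del K v) a b (isComplex_del hK v)
          ⟨ha, fun h => hva (Finset.mem_singleton.1 h)⟩ (fun F hF => hb F hF.1) hdeleq
      have hlKv : VertexDecomposable (link K v) := by rw [← hlinkeq]; exact hlinkVD
      by_cases hsh : IsSheddingVertex K v
      · exact .shed K v hsh hlKv hdKv
      · obtain ⟨F, hFlink, hFfac⟩ : ∃ F ∈ link K v, IsFacet (del K v) F := by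
          rw [IsSheddingVertex] at hsh
          push_neg at hsh
          exact hsh hvK
        have hFK : F ∈ K := hK.2 _ hFlink.2 F (Finset.subset_insert _ _)
        have hbF : b ∉ F := hb F hFK
        have hFa : F = ({a} : Finset V) := by
          by_contra hne
          have hFsa : F ⊆ {a} := by
            by_contra hnsub
            apply hshed.2 F (by rw [hlinkeq]; exact hFlink)
            rw [hdeleq]
            refine ⟨Or.inl hFfac.1, ?_⟩
            rintro G (hG | hG) hFG
            · exact hFfac.2 G hG hFG
            · have hG' : G ⊆ ({a, b} : Finset V) := hG
              exact absurd (subset_pair_of_not_right (hFG.trans hG') hbF) hnsub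
          rcases Finset.subset_singleton_iff.1 hFsa with rfl | rfl
          · have hadel : ({a} : Finset V) ∈ del K v :=
              ⟨ha, fun h => hva (Finset.mem_singleton.1 h)⟩
            exact Finset.singleton_ne_empty a (hFfac.2 {a} hadel (Finset.empty_subset _)).symm
          · exact hne rfl
        subst hFa
        have havK : insert v ({a} : Finset V) ∈ K := hFlink.2
        have hsub : ∀ G ∈ K, a ∈ G → G ⊆ ({a, v} : Finset V) := by
          intro G hG haG
          have h1 : G.erase v ∈ del K v :=
            ⟨hK.2 G hG _ (Finset.erase_subset _ _), Finset.notMem_erase _ _⟩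
          have h2 : ({a} : Finset V) ⊆ G.erase v :=
            Finset.singleton_subset_iff.2 (Finset.mem_erase.2 ⟨hav, haG⟩)
          have h3 := hFfac.2 _ h1 h2
          intro z hz
          by_cases hzv : z = v
          · subst hzv
            exact Finset.mem_insert_of_mem (Finset.mem_singleton_self z)
          · have h4 : z ∈ G.erase v := Finset.mem_erase.2 ⟨hzv, hz⟩
            rw [← h3] at h4
            rw [Finset.mem_insert]
            exact Or.inl (Finset.mem_singleton.1 h4)
        by_cases hBv : ∀ G ∈ K, v ∈ G → a ∉ G → G = {v}
        · -- K = ⟨{a,v}⟩ ∪ K₀ : use the swap lemma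
          have hK0c : IsComplex {F : Finset V | F ∈ K ∧ a ∉ F ∧ v ∉ F} := by
            constructor
            · exact ⟨hK.1, Finset.notMem_empty a, Finset.notMem_empty v⟩
            · intro F hF G hG
              exact ⟨hK.2 F hF.1 G hG, fun h => hF.2.1 (hG h), fun h => hF.2.2 (hG h)⟩
          have havK' : ({a, v} : Finset V) ∈ K := by
            rw [Finset.pair_comm]
            exact havK
          have hKeq : K = {G | G ⊆ ({a, v} : Finset V)}
              ∪ {F : Finset V | F ∈ K ∧ a ∉ F ∧ v ∉ F} := by
            ext G
            constructor
            · intro hG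
              by_cases haG : a ∈ G
              · exact Or.inl (hsub G hG haG)
              · by_cases hvG : v ∈ G
                · refine Or.inl ?_
                  show G ⊆ ({a, v} : Finset V)
                  rw [hBv G hG hvG haG]
                  exact Finset.singleton_subset_iff.2
                    (Finset.mem_insert_of_mem (Finset.mem_singleton_self v))
                · exact Or.inr ⟨hG, haG, hvG⟩
            · rintro (hG | hG)
              · exact hK.2 {a, v} havK' G hG
              · exact hG.1
          have hdelM : del (K ∪ {G | G ⊆ ({a, b} : Finset V)}) v
              = {G | G ⊆ ({a, b} : Finset V)} ∪ {F : Finset V | F ∈ K ∧ a ∉ F ∧ v ∉ F} := by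
            rw [hdeleq]
            ext F
            constructor
            · rintro (⟨hF, hvF⟩ | hF)
              · by_cases haF : a ∈ F
                · have h5 := hFfac.2 F ⟨hF, hvF⟩ (Finset.singleton_subset_iff.2 haF)
                  refine Or.inl ?_
                  show F ⊆ ({a, b} : Finset V)
                  rw [← h5]
                  exact Finset.singleton_subset_iff.2 (Finset.mem_insert_self a {b})
                · exact Or.inr ⟨hF, haF, hvF⟩
              · exact Or.inl hF
            · rintro (hF | hF)
              · exact Or.inr hF
              · exact Or.inl ⟨hF.1, hF.2.2⟩
          rw [hKeq]
          exact swap2 hdelVD _ a b v hK0c (fun F hF => hF.2.1) (fun F hF => hb F hF.1)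
            (fun F hF => hF.2.2) hba hva hdelM
        · push_neg at hBv
          obtain ⟨G₀, hG₀K, hvG₀, haG₀, hG₀ne⟩ := hBv
          have hvDa : ({v} : Finset V) ∈ del K a :=
            ⟨hvK, fun h => hav (Finset.mem_singleton.1 h)⟩
          have hlinkDa_eq : link K v = link (del K a) v ∪ {G | G ⊆ ({a} : Finset V)} := by
            ext F
            constructor
            · rintro ⟨hvF, hins⟩
              by_cases haF : a ∈ F
              · have h1 : insert v F ⊆ ({a, v} : Finset V) :=
                  hsub _ hins (Finset.mem_insert_of_mem haF)
                have h2 : F ⊆ ({a, v} : Finset V) := (Finset.subset_insert v F).trans h1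
                exact Or.inr (subset_pair_of_not_right h2 hvF)
              · refine Or.inl ⟨hvF, hins, fun h => ?_⟩
                rcases Finset.mem_insert.1 h with h' | h'
                · exact hav h'
                · exact haF h'
            · rintro (⟨hvF, hins⟩ | hF)
              · exact ⟨hvF, hins.1⟩
              · have hF' : F ⊆ ({a} : Finset V) := hF
                rcases Finset.subset_singleton_iff.1 hF' with rfl | rfl
                · exact ⟨Finset.notMem_empty v, by simpa using hvK⟩
                · exact ⟨fun h => hva (Finset.mem_singleton.1 h), havK⟩
          have hdelDa_eq : del K v = del (del K a) v ∪ {G | G ⊆ ({a} : Finset V)} := by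
            ext F
            constructor
            · rintro ⟨hFK2, hvF⟩
              by_cases haF : a ∈ F
              · have h5 := hFfac.2 F ⟨hFK2, hvF⟩ (Finset.singleton_subset_iff.2 haF)
                refine Or.inr ?_
                show F ⊆ ({a} : Finset V)
                rw [← h5]
              · exact Or.inl ⟨⟨hFK2, haF⟩, hvF⟩
            · rintro (⟨⟨hFK2, haF⟩, hvF⟩ | hF)
              · exact ⟨hFK2, hvF⟩
              · have hF' : F ⊆ ({a} : Finset V) := hF
                rcases Finset.subset_singleton_iff.1 hF' with rfl | rfl
                · exact ⟨hK.1, Finset.notMem_empty v⟩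
                · exact ⟨ha, fun h => hva (Finset.mem_singleton.1 h)⟩
          have hlinkDa_complex : IsComplex (link (del K a) v) := by
            constructor
            · exact ⟨Finset.notMem_empty v, by simpa using hvDa⟩
            · intro F hF G hG
              exact ⟨fun h => hF.1 (hG h),
                (isComplex_del hK a).2 _ hF.2 _ (Finset.insert_subset_insert v hG)⟩
          have hlD : VertexDecomposable (link (del K a) v) :=
            lemB hlKv _ a hlinkDa_complex
              (fun F hF h => hF.2.2 (Finset.mem_insert_of_mem h)) hlinkDa_eq
          have hdD : VertexDecomposable (del (del K a) v) :=
            lemB hdKv _ a (isComplex_del (isComplex_del hK a) v)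
              (fun F hF => hF.1.2) hdelDa_eq
          have hshedDa : IsSheddingVertex (del K a) v := by
            refine ⟨hvDa, ?_⟩
            intro F hF hfac
            have haF : a ∉ F := fun h => hF.2.2 (Finset.mem_insert_of_mem h)
            have hFdel : F ∈ del K a := (isComplex_del hK a).2 _ hF.2 F (Finset.subset_insert _ _)
            have hFK2 : F ∈ K := hFdel.1
            have hbF2 : b ∉ F := hb F hFK2
            by_cases hFe : F = ∅
            · subst hFe
              have hG₀e : G₀.erase v ∈ del (del K a) v :=
                ⟨⟨hK.2 G₀ hG₀K _ (Finset.erase_subset _ _),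
                  fun h => haG₀ (Finset.mem_of_mem_erase h)⟩, Finset.notMem_erase _ _⟩
              have h0 := hfac.2 _ hG₀e (Finset.empty_subset _)
              apply hG₀ne
              have h1 : G₀.erase v = ∅ := h0.symm
              rw [Finset.erase_eq_empty_iff] at h1
              rcases h1 with rfl | h1
              · exact absurd hvG₀ (Finset.notMem_empty v)
              · exact h1
            · apply hshed.2 F (by rw [hlinkeq, hlinkDa_eq]; exact Or.inl hF)
              rw [hdeleq]
              refine ⟨Or.inl (by rw [hdelDa_eq]; exact Or.inl hfac.1), ?_⟩
              rintro G (hG | hG) hFG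
              · rw [hdelDa_eq] at hG
                rcases hG with hG | hG
                · exact hfac.2 G hG hFG
                · have hG' : G ⊆ ({a} : Finset V) := hG
                  rcases Finset.subset_singleton_iff.1 (hFG.trans hG') with h | h
                  · exact absurd h hFe
                  · subst h
                    exact absurd (Finset.mem_singleton_self a) haF
              · have hG' : G ⊆ ({a, b} : Finset V) := hG
                rcases Finset.subset_singleton_iff.1
                  (subset_pair_of_not_right (hFG.trans hG') hbF2) with h | h
                · exact absurd h hFe
                · subst h
                  exact absurd (Finset.mem_singleton_self a) haF
          have hdelKaVD : VertexDecomposable (del K a) := .shed _ v hshedDa hlD hdD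
          refine .shed K a ⟨ha, ?_⟩ ?_ hdelKaVD
          · intro F hF hfac
            have hFv : F ⊆ ({v} : Finset V) := by
              have h1 : insert a F ⊆ ({a, v} : Finset V) :=
                hsub _ hF.2 (Finset.mem_insert_self a F)
              exact subset_pair_of_not_left ((Finset.subset_insert a F).trans h1) hF.1
            rcases Finset.subset_singleton_iff.1 hFv with rfl | rfl
            · exact Finset.singleton_ne_empty v (hfac.2 {v} hvDa (Finset.empty_subset _)).symm
            · have hG₀Da : G₀ ∈ del K a := ⟨hG₀K, haG₀⟩
              have h5 := hfac.2 G₀ hG₀Da (Finset.singleton_subset_iff.2 hvG₀)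
              exact hG₀ne h5.symm
          · refine .simplex _ ⟨{v}, ?_⟩
            ext F
            constructor
            · intro hF
              show F ⊆ {v}
              have h1 : insert a F ⊆ ({a, v} : Finset V) :=
                hsub _ hF.2 (Finset.mem_insert_self a F)
              exact subset_pair_of_not_left ((Finset.subset_insert a F).trans h1) hF.1
            · intro hF
              have hF' : F ⊆ ({v} : Finset V) := hF
              rcases Finset.subset_singleton_iff.1 hF' with rfl | rfl
              · exact ⟨Finset.notMem_empty a, by simpa using ha⟩
              · refine ⟨fun h => hav (Finset.mem_singleton.1 h), ?_⟩
                rw [Finset.pair_comm]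
                exact havK

end Stmt5Rev
theorem stmt5 {V : Type} [DecidableEq V] (K : Set (Finset V)) (hK : IsComplex K)
    (hconn : ComplexConnected K) (a b : V) (ha : ({a} : Finset V) ∈ K)
    (hb : ∀ F ∈ K, b ∉ F) :
    VertexDecomposable K ↔ VertexDecomposable (addFace K {a, b}) := by
  show VertexDecomposable K ↔ VertexDecomposable (K ∪ {G | G ⊆ ({a, b} : Finset V)})
  constructor
  · intro h
    have hba : b ≠ a := fun h' => hb {a} ha (by rw [h']; exact Finset.mem_singleton_self a)
    by_cases hfa : IsFacet K {a}
    · -- K must be the simplex on {a}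
      have hvert : ∀ w ∈ vertices K, w = a := by
        intro w hw
        have h0 := hconn.2 a ha w hw
        clear hw
        induction h0 with
        | refl => rfl
        | tail h1 h2 ih =>
          obtain ⟨F, hFK, hxF, hyF⟩ := h2
          subst ih
          have h3 := hfa.2 F hFK (Finset.singleton_subset_iff.2 hxF)
          rw [← h3] at hyF
          exact Finset.mem_singleton.1 hyF
      have hKa : K = {G | G ⊆ ({a} : Finset V)} := by
        ext G
        constructor
        · intro hG
          show G ⊆ {a}
          intro z hz
          rw [Finset.mem_singleton]
          exact hvert z (hK.2 G hG {z} (Finset.singleton_subset_iff.2 hz))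
        · intro hG
          have hG' : G ⊆ ({a} : Finset V) := hG
          rcases Finset.subset_singleton_iff.1 hG' with rfl | rfl
          · exact hK.1
          · exact ha
      refine .simplex _ ⟨{a, b}, ?_⟩
      ext G
      constructor
      · rintro (hG | hG)
        · rw [hKa] at hG
          have hG' : G ⊆ ({a} : Finset V) := hG
          exact hG'.trans (Finset.singleton_subset_iff.2 (Finset.mem_insert_self a {b}))
        · exact hG
      · intro hG
        exact Or.inr hG
    · refine .shed _ b ⟨Or.inr (Finset.singleton_subset_iff.2
        (Finset.mem_insert_of_mem (Finset.mem_singleton_self b))), ?_⟩ ?_ ?_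
      · intro F hF hfac
        obtain ⟨hbF, hins⟩ := hF
        have hFa : F ⊆ ({a} : Finset V) := by
          rcases hins with h' | h'
          · exact absurd (Finset.mem_insert_self b F) (hb _ h')
          · have h'' : insert b F ⊆ ({a, b} : Finset V) := h'
            exact subset_pair_of_not_right ((Finset.subset_insert b F).trans h'')
              (fun hh => hbF hh)
        rw [delb_eq hK ha hb] at hfac
        rcases Finset.subset_singleton_iff.1 hFa with rfl | rfl
        · exact Finset.singleton_ne_empty a (hfac.2 {a} ha (Finset.empty_subset _)).symm
        · exact hfa hfac
      · refine .simplex _ ⟨{a}, ?_⟩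
        ext F
        constructor
        · rintro ⟨hbF, hins | hins⟩
          · exact absurd (Finset.mem_insert_self b F) (hb _ hins)
          · have h'' : insert b F ⊆ ({a, b} : Finset V) := hins
            show F ⊆ ({a} : Finset V)
            exact subset_pair_of_not_right ((Finset.subset_insert b F).trans h'') hbF
        · intro hF
          have hF' : F ⊆ ({a} : Finset V) := hF
          refine ⟨fun hbF => hba (Finset.mem_singleton.1 (hF' hbF)), Or.inr ?_⟩
          show insert b F ⊆ ({a, b} : Finset V)
          exact Finset.insert_subset_iff.2
            ⟨Finset.mem_insert_of_mem (Finset.mem_singleton_self b),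
             hF'.trans (Finset.singleton_subset_iff.2 (Finset.mem_insert_self a {b}))⟩
      · rw [delb_eq hK ha hb]
        exact h
  · intro h'
    exact revWhisker h' K a b hK ha hb rfl
end

section
/- Let Γ be a simplicial complex and let a, b be two distinct free vertices of Γ contained in distinct facets E and F respectively, with |E| ≥ 2 and |F| ≥ 2. If Γ is vertex decomposable, then Γ + ⟨{a,b}⟩ is vertex decomposable. -/
open Finset SimpleGraph

variable {V : Type*} [DecidableEq V]

/-- A free vertex: a vertex contained in exactly one facet. -/
def IsFreeVertex {V : Type} [DecidableEq V] (K : Set (Finset V)) (a : V) : Prop :=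
  ({a} : Finset V) ∈ K ∧ ∃! F, IsFacet K F ∧ a ∈ F

namespace VD7

theorem vd_finite {V : Type*} [DecidableEq V] {K : Set (Finset V)}
    (h : VertexDecomposable K) : K.Finite := by
  induction h with
  | simplex K hs =>
    obtain ⟨F, rfl⟩ := hs
    exact Set.Finite.ofFinset F.powerset (by simp [Finset.mem_powerset])
  | shed K v hv hL hD ihL ihD =>
    apply Set.Finite.subset (ihD.union (ihL.image (insert v)))
    intro G hG
    by_cases hvG : v ∈ G
    · exact Or.inr ⟨G.erase v, ⟨Finset.notMem_erase v G, by rwa [Finset.insert_erase hvG]⟩,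
        Finset.insert_erase hvG⟩
    · exact Or.inl ⟨hG, hvG⟩

theorem exists_facet {V : Type*} [DecidableEq V] {K : Set (Finset V)} (hfin : K.Finite)
    {G : Finset V} (hG : G ∈ K) : ∃ E, IsFacet K E ∧ G ⊆ E := by
  classical
  obtain ⟨E, hE, hmax⟩ := Finset.exists_max_image (hfin.toFinset.filter (fun H => G ⊆ H))
    Finset.card ⟨G, by simp [hG]⟩
  simp only [Finset.mem_filter, Set.Finite.mem_toFinset] at hE
  refine ⟨E, ⟨hE.1, fun H hH hEH => ?_⟩, hE.2⟩
  have hle := hmax H (by simp [Finset.mem_filter, Set.Finite.mem_toFinset, hH, hE.2.trans hEH])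
  exact Finset.eq_of_subset_of_card_le hEH hle

theorem faces_subset_of_free {V : Type} [DecidableEq V] {K : Set (Finset V)} (hfin : K.Finite)
    {a : V} {E : Finset V} (ha : IsFreeVertex K a) (hE : IsFacet K E) (haE : a ∈ E) :
    ∀ G ∈ K, a ∈ G → G ⊆ E := by
  intro G hG haG
  obtain ⟨H, hH, hGH⟩ := exists_facet hfin hG
  obtain ⟨W, _, hu⟩ := ha.2
  have h1 : H = W := hu H ⟨hH, hGH haG⟩
  have h2 : E = W := hu E ⟨hE, haE⟩
  rw [h1.trans h2.symm] at hGH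
  exact hGH

theorem free_notMem_other {V : Type} [DecidableEq V] {K : Set (Finset V)}
    {a : V} {E F : Finset V} (ha : IsFreeVertex K a) (hE : IsFacet K E) (hF : IsFacet K F)
    (haE : a ∈ E) (hEF : E ≠ F) : a ∉ F := by
  intro haF
  obtain ⟨W, _, hu⟩ := ha.2
  exact hEF ((hu E ⟨hE, haE⟩).trans (hu F ⟨hF, haF⟩).symm)

theorem pair_vd {V : Type} [DecidableEq V] (S : Finset V) (b : V) (hb : b ∉ S)
    (hS : S.Nonempty) :
    VertexDecomposable ({G | G ⊆ S} ∪ {G | G ⊆ ({b} : Finset V)} : Set (Finset V)) := by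
  set K0 : Set (Finset V) := {G | G ⊆ S} ∪ {G | G ⊆ ({b} : Finset V)} with hK0
  have hlink : link K0 b = {G | G ⊆ (∅ : Finset V)} := by
    ext G
    constructor
    · rintro ⟨hbG, hins | hins⟩
      · exact absurd (hins (Finset.mem_insert_self b G)) hb
      · intro x hx
        have hx2 : x ∈ ({b} : Finset V) := hins (Finset.mem_insert_of_mem hx)
        rw [Finset.mem_singleton] at hx2
        exact absurd (hx2 ▸ hx) hbG
    · intro hG
      have hGe : G = ∅ := Finset.subset_empty.mp hG
      subst hGe
      exact ⟨Finset.notMem_empty b, Or.inr (by simp)⟩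
  have hdel : del K0 b = {G | G ⊆ S} := by
    ext G
    constructor
    · rintro ⟨hG | hG, hbG⟩
      · exact hG
      · intro x hx
        have hx2 := hG hx
        rw [Finset.mem_singleton] at hx2
        exact absurd (hx2 ▸ hx) hbG
    · intro hG
      exact ⟨Or.inl hG, fun hbG => hb (hG hbG)⟩
  refine VertexDecomposable.shed K0 b ⟨Or.inr (by simp), ?_⟩ ?_ ?_
  · intro G hG
    rw [hlink] at hG
    have hGe : G = ∅ := Finset.subset_empty.mp hG
    subst hGe
    rintro ⟨_, hmax⟩
    have hSmem : S ∈ del K0 b := by rw [hdel]; exact Finset.Subset.refl S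
    exact hS.ne_empty ((hmax S hSmem (Finset.empty_subset S)).symm)
  · rw [hlink]; exact VertexDecomposable.simplex _ ⟨∅, rfl⟩
  · rw [hdel]; exact VertexDecomposable.simplex _ ⟨S, rfl⟩

theorem shed_free_case {V : Type} [DecidableEq V] {K : Set (Finset V)} (hK : IsComplex K)
    (hfin : K.Finite) {a b : V} {E F : Finset V} (hab : a ≠ b) (hEF : E ≠ F)
    (hE : IsFacet K E) (hF : IsFacet K F) (haE : a ∈ E) (hbF : b ∈ F)
    (ha : IsFreeVertex K a) (hb : IsFreeVertex K b)
    (hE2 : 2 ≤ E.card) (hF2 : 2 ≤ F.card)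
    (hshed : IsSheddingVertex K a) (hdel : VertexDecomposable (del K a)) :
    VertexDecomposable (addFace K {a, b}) := by
  have haF : a ∉ F := free_notMem_other ha hE hF haE hEF
  have hbE : b ∉ E := free_notMem_other hb hF hE hbF (Ne.symm hEF)
  have hbK : ({b} : Finset V) ∈ K := hb.1
  have hdelEq : del (addFace K {a, b}) a = del K a := by
    ext G
    constructor
    · rintro ⟨hG | hG, haG⟩
      · exact ⟨hG, haG⟩
      · have hGb : G ⊆ {b} := by
          intro x hx
          rcases Finset.mem_insert.mp (hG hx) with h | h
          · exact absurd (h ▸ hx) haG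
          · exact h
        exact ⟨hK.2 _ hbK G hGb, haG⟩
    · rintro ⟨hG, haG⟩
      exact ⟨Or.inl hG, haG⟩
  have hlinkEq : link (addFace K {a, b}) a
      = {G | G ⊆ E.erase a} ∪ {G | G ⊆ ({b} : Finset V)} := by
    ext G
    constructor
    · rintro ⟨haG, hins | hins⟩
      · left
        have hsub : insert a G ⊆ E :=
          faces_subset_of_free hfin ha hE haE _ hins (Finset.mem_insert_self a G)
        intro x hx
        exact Finset.mem_erase.mpr ⟨fun hxa => haG (hxa ▸ hx),
          hsub (Finset.mem_insert_of_mem hx)⟩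
      · right
        intro x hx
        rcases Finset.mem_insert.mp (hins (Finset.mem_insert_of_mem hx)) with h | h
        · exact absurd (h ▸ hx) haG
        · exact h
    · rintro (hG | hG)
      · refine ⟨fun haG => (Finset.mem_erase.mp (hG haG)).1 rfl,
          Or.inl (hK.2 E hE.1 _ ?_)⟩
        exact Finset.insert_subset haE (hG.trans (Finset.erase_subset a E))
      · refine ⟨fun haG => hab (Finset.mem_singleton.mp (hG haG)), Or.inr ?_⟩
        exact Finset.insert_subset (Finset.mem_insert_self a _)
          (hG.trans (Finset.subset_insert a {b}))
  refine VertexDecomposable.shed _ a ⟨Or.inl ha.1, ?_⟩ ?_ ?_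
  · intro G hG
    rw [hdelEq]
    rw [hlinkEq] at hG
    rcases hG with hG | hG
    · have hGlink : G ∈ link K a := by
        refine ⟨fun haG => (Finset.mem_erase.mp (hG haG)).1 rfl, hK.2 E hE.1 _ ?_⟩
        exact Finset.insert_subset haE (hG.trans (Finset.erase_subset a E))
      exact hshed.2 G hGlink
    · rintro ⟨hGmem, hmax⟩
      have hGF : G ⊆ F := hG.trans (Finset.singleton_subset_iff.mpr hbF)
      have hGeqF := hmax F ⟨hF.1, haF⟩ hGF
      have hcard : G.card ≤ 1 := le_trans (Finset.card_le_card hG) (by simp)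
      rw [hGeqF] at hcard
      omega
  · rw [hlinkEq]
    refine pair_vd (E.erase a) b (fun hmem => hbE (Finset.mem_of_mem_erase hmem)) ?_
    rw [← Finset.card_pos, Finset.card_erase_of_mem haE]
    omega
  · rw [hdelEq]; exact hdel

theorem aux_main {V : Type} [DecidableEq V] {K : Set (Finset V)} (h : VertexDecomposable K) :
    ∀ (a b : V) (E F : Finset V), IsComplex K → a ≠ b → E ≠ F →
      IsFacet K E → IsFacet K F → a ∈ E → b ∈ F →
      IsFreeVertex K a → IsFreeVertex K b → 2 ≤ E.card → 2 ≤ F.card →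
      VertexDecomposable (addFace K {a, b}) := by
  induction h with
  | simplex K hs =>
    intro a b E F hK hab hEF hE hF haE hbF ha hb hE2 hF2
    exfalso
    obtain ⟨S, rfl⟩ := hs
    have hSmem : S ∈ {G : Finset V | G ⊆ S} := Finset.Subset.refl S
    have hES : E = S := hE.2 S hSmem hE.1
    have hFS : F = S := hF.2 S hSmem hF.1
    exact hEF (hES.trans hFS.symm)
  | shed K v hv hL hD ihL ihD =>
    intro a b E F hK hab hEF hE hF haE hbF ha hb hE2 hF2
    have hvd : VertexDecomposable K := VertexDecomposable.shed K v hv hL hD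
    have hfin : K.Finite := vd_finite hvd
    by_cases hva : v = a
    · subst hva
      exact shed_free_case hK hfin hab hEF hE hF haE hbF ha hb hE2 hF2 hv hD
    by_cases hvb : v = b
    · have hres := shed_free_case hK hfin (Ne.symm hab) (Ne.symm hEF) hF hE hbF haE
        hb ha hF2 hE2 (hvb ▸ hv) (hvb ▸ hD)
      rwa [Finset.pair_comm b a] at hres
    -- main case : v ∉ {a, b}
    have haF : a ∉ F := free_notMem_other ha hE hF haE hEF
    have hKD : IsComplex (del K v) := ⟨⟨hK.1, Finset.notMem_empty v⟩,
      fun Fa hFa G hG => ⟨hK.2 Fa hFa.1 G hG, fun hvG => hFa.2 (hG hvG)⟩⟩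
    have key : ∀ (c : V) (C : Finset V), IsFreeVertex K c → IsFacet K C → c ∈ C →
        v ≠ c → 2 ≤ C.card → 2 ≤ (C.erase v).card := by
      intro c C hc hC hcC hvc hC2
      by_cases hvC : v ∈ C
      swap
      · rw [Finset.erase_eq_of_notMem hvC]; exact hC2
      have hsubs : ∀ G ∈ K, c ∈ G → G ⊆ C := faces_subset_of_free hfin hc hC hcC
      by_contra hlt
      have hcard : C.card = 2 := by
        have := Finset.card_erase_of_mem hvC
        have := Finset.card_pos.mpr ⟨c, hcC⟩
        omega
      have hCeq : C = {c, v} := by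
        have hsub : ({c, v} : Finset V) ⊆ C := by
          intro x hx
          rcases Finset.mem_insert.mp hx with rfl | hx
          · exact hcC
          · exact (Finset.mem_singleton.mp hx) ▸ hvC
        exact (Finset.eq_of_subset_of_card_le hsub
          (by rw [hcard, Finset.card_pair (Ne.symm hvc)])).symm
      have hclink : ({c} : Finset V) ∈ link K v := by
        refine ⟨fun hmem => hvc (Finset.mem_singleton.mp hmem), ?_⟩
        have : insert v ({c} : Finset V) = C := by
          rw [hCeq]; exact Finset.pair_comm v c
        rw [this]; exact hC.1
      refine hv.2 {c} hclink ⟨⟨hc.1, fun hmem => hvc (Finset.mem_singleton.mp hmem)⟩, ?_⟩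
      intro H hH hsubH
      have hHC : H ⊆ C := hsubs H hH.1 (hsubH (Finset.mem_singleton_self c))
      refine (Finset.Subset.antisymm hsubH (fun x hx => ?_))
      have hx2 := hCeq ▸ hHC hx
      rcases Finset.mem_insert.mp hx2 with rfl | hx2
      · exact Finset.mem_singleton_self x
      · exact absurd ((Finset.mem_singleton.mp hx2) ▸ hx) hH.2
    have hfacetD : ∀ (c : V) (C : Finset V), IsFreeVertex K c → IsFacet K C → c ∈ C →
        v ≠ c → IsFacet (del K v) (C.erase v) ∧ IsFreeVertex (del K v) c := by
      intro c C hc hC hcC hvc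
      have hsubs : ∀ G ∈ K, c ∈ G → G ⊆ C := faces_subset_of_free hfin hc hC hcC
      have hcC' : c ∈ C.erase v := Finset.mem_erase.mpr ⟨Ne.symm hvc, hcC⟩
      have hmemD : C.erase v ∈ del K v :=
        ⟨hK.2 C hC.1 _ (Finset.erase_subset v C), Finset.notMem_erase v C⟩
      have hfac : IsFacet (del K v) (C.erase v) := by
        refine ⟨hmemD, fun H hH hsubH => ?_⟩
        have hHC : H ⊆ C := hsubs H hH.1 (hsubH hcC')
        exact Finset.Subset.antisymm hsubH (fun x hx => Finset.mem_erase.mpr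
          ⟨fun hxv => hH.2 (hxv ▸ hx), hHC hx⟩)
      refine ⟨hfac, ⟨⟨hc.1, fun hmem => hvc (Finset.mem_singleton.mp hmem)⟩,
        ⟨C.erase v, ⟨hfac, hcC'⟩, ?_⟩⟩⟩
      rintro G ⟨hGfac, hcG⟩
      have hGC : G ⊆ C := hsubs G hGfac.1.1 hcG
      have hGsub : G ⊆ C.erase v := fun x hx =>
        Finset.mem_erase.mpr ⟨fun hxv => hGfac.1.2 (hxv ▸ hx), hGC hx⟩
      exact hGfac.2 (C.erase v) hmemD hGsub
    obtain ⟨hEfac, haD⟩ := hfacetD a E ha hE haE hva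
    obtain ⟨hFfac, hbD⟩ := hfacetD b F hb hF hbF hvb
    have hE'F' : E.erase v ≠ F.erase v := by
      intro heq
      have : a ∈ F.erase v := heq ▸ (Finset.mem_erase.mpr ⟨Ne.symm hva, haE⟩)
      exact haF (Finset.mem_of_mem_erase this)
    have hlinkEq : link (addFace K {a, b}) v = link K v := by
      ext G
      constructor
      · rintro ⟨hvG, hins | hins⟩
        · exact ⟨hvG, hins⟩
        · exfalso
          rcases Finset.mem_insert.mp (hins (Finset.mem_insert_self v G)) with h | h
          · exact hva h
          · exact hvb (Finset.mem_singleton.mp h)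
      · rintro ⟨hvG, hins⟩; exact ⟨hvG, Or.inl hins⟩
    have hdelEq : del (addFace K {a, b}) v = addFace (del K v) {a, b} := by
      ext G
      constructor
      · rintro ⟨hG | hG, hvG⟩
        · exact Or.inl ⟨hG, hvG⟩
        · exact Or.inr hG
      · rintro (⟨hG, hvG⟩ | hG)
        · exact ⟨Or.inl hG, hvG⟩
        · refine ⟨Or.inr hG, fun hvG => ?_⟩
          rcases Finset.mem_insert.mp (hG hvG) with h | h
          · exact hva h
          · exact hvb (Finset.mem_singleton.mp h)
    refine VertexDecomposable.shed _ v ⟨Or.inl hv.1, ?_⟩ ?_ ?_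
    · intro G hG
      rw [hlinkEq] at hG
      have hnot := hv.2 G hG
      have hGD : G ∈ del K v := ⟨hK.2 _ hG.2 G (Finset.subset_insert v G), hG.1⟩
      have hex : ∃ H ∈ del K v, G ⊆ H ∧ G ≠ H := by
        by_contra hcon
        push_neg at hcon
        exact hnot ⟨hGD, fun H hH hGH => hcon H hH hGH⟩
      obtain ⟨H, hH, hGH, hne⟩ := hex
      rw [hdelEq]
      rintro ⟨_, hmax⟩
      exact hne (hmax H (Or.inl hH) hGH)
    · rw [hlinkEq]; exact hL
    · rw [hdelEq]
      exact ihD a b (E.erase v) (F.erase v) hKD hab hE'F' hEfac hFfac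
        (Finset.mem_erase.mpr ⟨Ne.symm hva, haE⟩) (Finset.mem_erase.mpr ⟨Ne.symm hvb, hbF⟩)
        haD hbD (key a E ha hE haE hva hE2) (key b F hb hF hbF hvb hF2)

end VD7

theorem stmt7 {V : Type} [DecidableEq V] (K : Set (Finset V)) (hK : IsComplex K)
    (a b : V) (E F : Finset V) (hab : a ≠ b) (hEF : E ≠ F)
    (hE : IsFacet K E) (hF : IsFacet K F) (haE : a ∈ E) (hbF : b ∈ F)
    (ha : IsFreeVertex K a) (hb : IsFreeVertex K b)
    (hE2 : 2 ≤ E.card) (hF2 : 2 ≤ F.card) :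
    VertexDecomposable K → VertexDecomposable (addFace K {a, b}) := fun h =>
  VD7.aux_main h a b E F hK hab hEF hE hF haE hbF ha hb hE2 hF2
end

section
/- Let Γ be a simplicial complex and let a, b be two distinct free vertices of Γ contained in distinct facets E and F respectively, with |E| ≥ 3 and |F| ≥ 3. If Γ + ⟨{a,b}⟩ is vertex decomposable, then Γ is vertex decomposable. -/
open Finset SimpleGraph

variable {V : Type*} [DecidableEq V]

/-- Vertex decomposable complexes are finite. -/
lemma vd_finite {V : Type} [DecidableEq V] {L : Set (Finset V)}
    (h : VertexDecomposable L) : L.Finite := by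
  induction h with
  | simplex K hs =>
    obtain ⟨F, rfl⟩ := hs
    exact (F.powerset : Finset (Finset V)).finite_toSet.subset
      (fun G hG => Finset.mem_coe.2 (Finset.mem_powerset.2 hG))
  | shed K v hs hl hd ihl ihd =>
    have hsub : K ⊆ del K v ∪ (insert v '' link K v) := by
      intro G hG
      by_cases hv : v ∈ G
      · exact Or.inr ⟨G.erase v, ⟨Finset.notMem_erase _ _,
          by rwa [Finset.insert_erase hv]⟩, Finset.insert_erase hv⟩
      · exact Or.inl ⟨hG, hv⟩
    exact (ihd.union (ihl.image _)).subset hsub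

/-- In a finite complex every face is contained in a facet. -/
lemma exists_facet {V : Type} [DecidableEq V] {K : Set (Finset V)} (hfin : K.Finite)
    {G : Finset V} (hG : G ∈ K) : ∃ H, IsFacet K H ∧ G ⊆ H := by
  have hS : {H ∈ K | G ⊆ H}.Finite := hfin.subset fun _ h => h.1
  obtain ⟨H, hH, hmax⟩ := hS.exists_maximal ⟨G, hG, subset_rfl⟩
  exact ⟨H, ⟨hH.1, fun G' hG' hsub => subset_antisymm hsub (hmax ⟨hG', hH.2.trans hsub⟩ hsub)⟩, hH.2⟩

/-- Any face containing a free vertex is contained in its unique facet. -/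
lemma free_subset {V : Type} [DecidableEq V] {K : Set (Finset V)} (hfin : K.Finite)
    {a : V} {E : Finset V} (ha : IsFreeVertex K a) (hE : IsFacet K E) (haE : a ∈ E)
    {G : Finset V} (hG : G ∈ K) (haG : a ∈ G) : G ⊆ E := by
  obtain ⟨H, hH, hGH⟩ := exists_facet hfin hG
  obtain ⟨W, hW, hu⟩ := ha.2
  have hHE : H = E := (hu H ⟨hH, hGH haG⟩).trans (hu E ⟨hE, haE⟩).symm
  exact hHE ▸ hGH

lemma facet_unique {V : Type} [DecidableEq V] {K : Set (Finset V)} {b : V}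
    {F G : Finset V} (hb : IsFreeVertex K b) (hF : IsFacet K F) (hbF : b ∈ F)
    (hG : IsFacet K G) (hbG : b ∈ G) : G = F := by
  obtain ⟨W, hW, hu⟩ := hb.2
  exact (hu G ⟨hG, hbG⟩).trans (hu F ⟨hF, hbF⟩).symm

/-- If the shedding vertex of `K + ⟨{a,b}⟩` is `a` itself, then `K` is VD. -/
lemma case_shed_self {V : Type} [DecidableEq V] {K : Set (Finset V)} (hK : IsComplex K)
    (hfin : K.Finite) {a b : V} {E : Finset V} (hE : IsFacet K E) (haE : a ∈ E)
    (ha : IsFreeVertex K a) (hbK : ({b} : Finset V) ∈ K) (hab : a ≠ b)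
    (hshed : IsSheddingVertex (addFace K {a, b}) a)
    (hdel : VertexDecomposable (del (addFace K {a, b}) a)) : VertexDecomposable K := by
  have hdel_eq : del (addFace K {a, b}) a = del K a := by
    ext G
    constructor
    · rintro ⟨hG | hG, haG⟩
      · exact ⟨hG, haG⟩
      · have hGb : G ⊆ {b} := by
          intro x hx
          rcases Finset.mem_insert.1 (hG hx) with rfl | h
          · exact absurd hx haG
          · exact h
        exact ⟨hK.2 {b} hbK G hGb, haG⟩
    · rintro ⟨h1, h2⟩
      exact ⟨Or.inl h1, h2⟩
  have hlinksubset : ∀ G ∈ link K a, G ⊆ E.erase a := by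
    intro G hG
    have hEsub : insert a G ⊆ E :=
      free_subset hfin ha hE haE hG.2 (Finset.mem_insert_self a G)
    intro x hx
    exact Finset.mem_erase.2 ⟨fun h => hG.1 (h ▸ hx), hEsub (Finset.mem_insert_of_mem hx)⟩
  have hlink_simplex : link K a = {G | G ⊆ E.erase a} := by
    apply Set.eq_of_subset_of_subset (fun G hG => hlinksubset G hG)
    intro G hG
    refine ⟨fun h => (Finset.notMem_erase a E) (hG h), hK.2 E hE.1 _ ?_⟩
    intro x hx
    rcases Finset.mem_insert.1 hx with rfl | h
    · exact haE
    · exact Finset.mem_of_mem_erase (hG h)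
  have hashed : IsSheddingVertex K a := by
    refine ⟨ha.1, fun G hG hfac => ?_⟩
    have hGsub : G ⊆ E.erase a := hlinksubset G hG
    have hEe : E.erase a ∈ del K a :=
      ⟨hK.2 E hE.1 _ (Finset.erase_subset _ _), Finset.notMem_erase _ _⟩
    have hGE : G = E.erase a := hfac.2 _ hEe hGsub
    refine hshed.2 (E.erase a)
      ⟨Finset.notMem_erase _ _, Or.inl (by rw [Finset.insert_erase haE]; exact hE.1)⟩ ?_
    rw [hdel_eq]
    exact hGE ▸ hfac
  exact VertexDecomposable.shed K a hashed
    (VertexDecomposable.simplex (link K a) ⟨E.erase a, hlink_simplex⟩) (hdel_eq ▸ hdel)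

/-- A shedding vertex of `K + ⟨{a,b}⟩` other than `a` cannot lie in the facet of `a`. -/
lemma shed_not_mem {V : Type} [DecidableEq V] {K : Set (Finset V)} (hK : IsComplex K)
    (hfin : K.Finite) {a b v : V} {E : Finset V} (hab : a ≠ b) (hE : IsFacet K E)
    (haE : a ∈ E) (ha : IsFreeVertex K a) (hbE : b ∉ E) (hE3 : 3 ≤ E.card)
    (hav : a ≠ v) (hshed : IsSheddingVertex (addFace K {a, b}) v) : v ∉ E := by
  intro hvE
  refine hshed.2 (E.erase v)
    ⟨Finset.notMem_erase _ _, Or.inl (by rw [Finset.insert_erase hvE]; exact hE.1)⟩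
    ⟨⟨Or.inl (hK.2 E hE.1 _ (Finset.erase_subset _ _)), Finset.notMem_erase _ _⟩, ?_⟩
  intro H hH hsub
  rcases hH.1 with hHK | hHab
  · have haH : a ∈ H := hsub (Finset.mem_erase.2 ⟨hav, haE⟩)
    have hHE : H ⊆ E := free_subset hfin ha hE haE hHK haH
    exact subset_antisymm hsub (fun x hx =>
      Finset.mem_erase.2 ⟨fun h => hH.2 (h ▸ hx), hHE hx⟩)
  · exfalso
    have h1 : E.erase v ⊆ ({a, b} : Finset V) := hsub.trans hHab
    have h2 : ({a, b} : Finset V).card ≤ (E.erase v).card := by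
      rw [Finset.card_pair hab, Finset.card_erase_of_mem hvE]
      omega
    have h3 := Finset.eq_of_subset_of_card_le h1 h2
    have hb' : b ∈ E.erase v := by rw [h3]; simp
    exact hbE (Finset.mem_of_mem_erase hb')

theorem aux_stmt8 {V : Type} [DecidableEq V] {L : Set (Finset V)}
    (hVD : VertexDecomposable L) :
    ∀ (K : Set (Finset V)) (a b : V) (E F : Finset V), IsComplex K → K.Finite → a ≠ b →
      E ≠ F → IsFacet K E → IsFacet K F → a ∈ E → b ∈ F → IsFreeVertex K a →
      IsFreeVertex K b → 3 ≤ E.card → 3 ≤ F.card → L = addFace K {a, b} →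
      VertexDecomposable K := by
  induction hVD with
  | simplex M hs =>
    intro K a b E F hK hfin hab hEF hE hF haE hbF ha hb hE3 hF3 hL
    subst hL
    exfalso
    obtain ⟨W, hW⟩ := hs
    have hbE : b ∉ E := fun h => hEF (facet_unique hb hF hbF hE h)
    have hEW : E ⊆ W := by
      have hmem : E ∈ addFace K {a, b} := Or.inl hE.1
      rw [hW] at hmem
      exact hmem
    have hWL : W ∈ addFace K {a, b} := by
      rw [hW]; exact Set.mem_setOf_eq ▸ subset_rfl
    rcases hWL with hWK | hWab
    · have hEW' : E = W := hE.2 W hWK hEW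
      have habW : ({a, b} : Finset V) ⊆ W := by
        have hmem : ({a, b} : Finset V) ∈ addFace K {a, b} := Or.inr (fun x hx => hx)
        rw [hW] at hmem
        exact hmem
      have hbW : b ∈ W := habW (by simp)
      rw [← hEW'] at hbW
      exact hbE hbW
    · have hc := Finset.card_le_card (hEW.trans hWab)
      rw [Finset.card_pair hab] at hc
      omega
  | shed M v hshed hlinkVD hdelVD ihlink ihdel =>
    intro K a b E F hK hfin hab hEF hE hF haE hbF ha hb hE3 hF3 hL
    subst hL
    have hbE : b ∉ E := fun h => hEF (facet_unique hb hF hbF hE h)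
    have haF : a ∉ F := fun h => hEF (facet_unique ha hE haE hF h).symm
    by_cases hva : v = a
    · subst hva
      exact case_shed_self hK hfin hE haE ha hb.1 hab hshed hdelVD
    · by_cases hvb : v = b
      · subst hvb
        rw [Finset.pair_comm] at hshed hdelVD
        exact case_shed_self hK hfin hF hbF hb ha.1 (Ne.symm hab) hshed hdelVD
      · have hvE : v ∉ E :=
          shed_not_mem hK hfin hab hE haE ha hbE hE3 (fun h => hva h.symm) hshed
        have hvF : v ∉ F := by
          have hshed' := hshed
          rw [Finset.pair_comm] at hshed'
          exact shed_not_mem hK hfin (Ne.symm hab) hF hbF hb haF hF3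
            (fun h => hvb h.symm) hshed'
        have hvab : v ∉ ({a, b} : Finset V) := by simp [hva, hvb]
        have hdel_eq : del (addFace K {a, b}) v = addFace (del K v) {a, b} := by
          ext G
          constructor
          · rintro ⟨hGK | hGab, hvG⟩
            · exact Or.inl ⟨hGK, hvG⟩
            · exact Or.inr hGab
          · rintro (⟨h1, h2⟩ | hGab)
            · exact ⟨Or.inl h1, h2⟩
            · exact ⟨Or.inr hGab, fun h => hvab (hGab h)⟩
        have hlink_eq : link (addFace K {a, b}) v = link K v := by
          ext G
          constructor
          · rintro ⟨h1, h2 | h2⟩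
            · exact ⟨h1, h2⟩
            · exact absurd (h2 (Finset.mem_insert_self v G)) hvab
          · rintro ⟨h1, h2⟩
            exact ⟨h1, Or.inl h2⟩
        have hKd : IsComplex (del K v) :=
          ⟨⟨hK.1, Finset.notMem_empty v⟩,
           fun F1 hF1 G hG => ⟨hK.2 F1 hF1.1 G hG, fun h => hF1.2 (hG h)⟩⟩
        have hEd : IsFacet (del K v) E := ⟨⟨hE.1, hvE⟩, fun G hG hsub => hE.2 G hG.1 hsub⟩
        have hFd : IsFacet (del K v) F := ⟨⟨hF.1, hvF⟩, fun G hG hsub => hF.2 G hG.1 hsub⟩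
        have had : IsFreeVertex (del K v) a := by
          refine ⟨⟨ha.1, fun h => hva (Finset.mem_singleton.1 h)⟩, E, ⟨hEd, haE⟩, ?_⟩
          rintro G ⟨hGf, haG⟩
          exact hGf.2 E hEd.1 (free_subset hfin ha hE haE hGf.1.1 haG)
        have hbd : IsFreeVertex (del K v) b := by
          refine ⟨⟨hb.1, fun h => hvb (Finset.mem_singleton.1 h)⟩, F, ⟨hFd, hbF⟩, ?_⟩
          rintro G ⟨hGf, hbG⟩
          exact hGf.2 F hFd.1 (free_subset hfin hb hF hbF hGf.1.1 hbG)
        have hfin' : (del K v).Finite := hfin.subset fun _ h => h.1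
        have hVDdel : VertexDecomposable (del K v) :=
          ihdel (del K v) a b E F hKd hfin' hab hEF hEd hFd haE hbF had hbd hE3 hF3 hdel_eq
        have hvshed : IsSheddingVertex K v := by
          constructor
          · rcases hshed.1 with h | h
            · exact h
            · exact absurd (h (Finset.mem_singleton_self v)) hvab
          · intro G hG hfac
            have hGnab : ¬ G ⊆ ({a, b} : Finset V) := by
              intro hGab
              by_cases haG : a ∈ G
              · have hGE : G = E := hfac.2 E hEd.1 (free_subset hfin ha hE haE hfac.1.1 haG)
                have hc := Finset.card_le_card hGab
                rw [hGE, Finset.card_pair hab] at hc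
                omega
              · by_cases hbG : b ∈ G
                · have hGF : G = F :=
                    hfac.2 F hFd.1 (free_subset hfin hb hF hbF hfac.1.1 hbG)
                  have hc := Finset.card_le_card hGab
                  rw [hGF, Finset.card_pair hab] at hc
                  omega
                · have hGe : G = ∅ := by
                    refine Finset.eq_empty_iff_forall_notMem.2 (fun x hx => ?_)
                    rcases Finset.mem_insert.1 (hGab hx) with rfl | h
                    · exact haG hx
                    · rw [Finset.mem_singleton] at h
                      subst h
                      exact hbG hx
                  have haD : ({a} : Finset V) ∈ del K v :=
                    ⟨ha.1, fun h => hva (Finset.mem_singleton.1 h)⟩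
                  have : G = {a} := hfac.2 {a} haD (by rw [hGe]; exact Finset.empty_subset _)
                  exact haG (by rw [this]; exact Finset.mem_singleton_self a)
            refine hshed.2 G (by rw [hlink_eq]; exact hG) ⟨⟨Or.inl hfac.1.1, hfac.1.2⟩, ?_⟩
            intro H hH hsub
            rcases hH.1 with h | h
            · exact hfac.2 H ⟨h, hH.2⟩ hsub
            · exact absurd (hsub.trans h) hGnab
        exact VertexDecomposable.shed K v hvshed (hlink_eq ▸ hlinkVD) hVDdel

theorem stmt8 {V : Type} [DecidableEq V] (K : Set (Finset V)) (hK : IsComplex K)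
    (a b : V) (E F : Finset V) (hab : a ≠ b) (hEF : E ≠ F)
    (hE : IsFacet K E) (hF : IsFacet K F) (haE : a ∈ E) (hbF : b ∈ F)
    (ha : IsFreeVertex K a) (hb : IsFreeVertex K b)
    (hE3 : 3 ≤ E.card) (hF3 : 3 ≤ F.card) :
    VertexDecomposable (addFace K {a, b}) → VertexDecomposable K := by
  intro hVD
  have hfin : K.Finite := (vd_finite hVD).subset (fun G hG => Or.inl hG)
  exact aux_stmt8 hVD K a b E F hK hfin hab hEF hE hF haE hbF ha hb hE3 hF3 rfl
end

section
/- Let Γ be a simplicial complex and let a, b be two distinct free vertices of Γ contained in distinct facets E and F respectively, with |E| ≥ 2 and |F| ≥ 2. If Γ is shellable, then Γ + ⟨{a,b}⟩ is shellable; moreover, if |E| ≥ 3 and |F| ≥ 3 and Γ + ⟨{a,b}⟩ is shellable, then Γ is shellable. -/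
open Finset SimpleGraph

variable {V : Type*} [DecidableEq V]

section StmtNineAux
variable {V : Type} [DecidableEq V]

omit [DecidableEq V] in
lemma stmt9_gen_union (S T : Set (Finset V)) : gen (S ∪ T) = gen S ∪ gen T := by
  ext x
  simp only [gen, Set.mem_setOf_eq, Set.mem_union]
  constructor
  · rintro ⟨G, (hG | hG), hx⟩
    · exact Or.inl ⟨G, hG, hx⟩
    · exact Or.inr ⟨G, hG, hx⟩
  · rintro (⟨G, hG, hx⟩ | ⟨G, hG, hx⟩)
    · exact ⟨G, Or.inl hG, hx⟩
    · exact ⟨G, Or.inr hG, hx⟩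

lemma stmt9_exists_facet {I : Set (Finset V)} {G : Finset V}
    (hbd : ∀ x ∈ I, x ⊆ G) {x : Finset V} (hx : x ∈ I) :
    ∃ M, IsFacet I M ∧ x ⊆ M := by
  classical
  set T := G.powerset.filter (fun y => y ∈ I ∧ x ⊆ y) with hT
  have hxT : x ∈ T := by
    simp only [hT, Finset.mem_filter, Finset.mem_powerset]
    exact ⟨hbd x hx, hx, Finset.Subset.refl x⟩
  obtain ⟨M, hM, hmax⟩ := T.exists_max_image Finset.card ⟨x, hxT⟩
  simp only [hT, Finset.mem_filter, Finset.mem_powerset] at hM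
  refine ⟨M, ⟨hM.2.1, fun y hy hsub => ?_⟩, hM.2.2⟩
  have hyT : y ∈ T := by
    simp only [hT, Finset.mem_filter, Finset.mem_powerset]
    exact ⟨hbd y hy, hy, hM.2.2.trans hsub⟩
  exact Finset.eq_of_subset_of_card_le hsub (hmax y hyT)

lemma stmt9_transfer {I : Set (Finset V)} {s G : Finset V} {n : ℕ}
    (hbd : ∀ x ∈ I, x ⊆ G) (hsG : s ⊆ G)
    (hex : ∃ M, IsFacet (I ∪ {x : Finset V | x ⊆ s}) M)
    (hcard : ∀ M, IsFacet (I ∪ {x : Finset V | x ⊆ s}) M → M.card + 1 = n)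
    (hlt : s.card + 1 < n) :
    (∃ M, IsFacet I M) ∧ ∀ M, IsFacet I M → M.card + 1 = n := by
  have hbd' : ∀ x ∈ I ∪ {x : Finset V | x ⊆ s}, x ⊆ G := by
    rintro x (hx | hx)
    · exact hbd x hx
    · exact hx.trans hsG
  have memI : ∀ M, IsFacet (I ∪ {x : Finset V | x ⊆ s}) M → M ∈ I := by
    intro M hM
    rcases hM.1 with h | h
    · exact h
    · exfalso
      have h1 := Finset.card_le_card h
      have h2 := hcard M hM
      omega
  have iff1 : ∀ M, IsFacet (I ∪ {x : Finset V | x ⊆ s}) M → IsFacet I M := fun M hM =>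
    ⟨memI M hM, fun y hy hsub => hM.2 y (Or.inl hy) hsub⟩
  obtain ⟨M0, hM0⟩ := hex
  refine ⟨⟨M0, iff1 M0 hM0⟩, fun M hM => ?_⟩
  obtain ⟨M', hM', hsub⟩ := stmt9_exists_facet hbd' (Or.inl hM.1)
  have heq : M = M' := hM.2 M' (memI M' hM') hsub
  rw [heq]
  exact hcard M' hM'

lemma stmt9_get_helper {α : Type*} (u w : List α) (c : α) (n : ℕ)
    (h1 : u.length ≤ n) (h2 : n < (u ++ w).length) (h3 : n + 1 < (u ++ c :: w).length) :
    (u ++ c :: w).get ⟨n + 1, h3⟩ = (u ++ w).get ⟨n, h2⟩ := by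
  simp only [List.get_eq_getElem]
  apply Option.some.inj
  rw [← List.getElem?_eq_getElem h3, ← List.getElem?_eq_getElem h2]
  rw [List.getElem?_append_right h1, List.getElem?_append_right (by omega : u.length ≤ n + 1),
    show n + 1 - u.length = (n - u.length) + 1 by omega]
  exact List.getElem?_cons_succ

end StmtNineAux

theorem stmt9 {V : Type} [DecidableEq V] (K : Set (Finset V)) (hK : IsComplex K)
    (a b : V) (E F : Finset V) (hab : a ≠ b) (hEF : E ≠ F)
    (hE : IsFacet K E) (hF : IsFacet K F) (haE : a ∈ E) (hbF : b ∈ F)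
    (ha : IsFreeVertex K a) (hb : IsFreeVertex K b)
    (hE2 : 2 ≤ E.card) (hF2 : 2 ≤ F.card) :
    (Shellable K → Shellable (addFace K {a, b})) ∧
    (3 ≤ E.card → 3 ≤ F.card → Shellable (addFace K {a, b}) → Shellable K) := by
  classical
  by_cases habK : ({a, b} : Finset V) ∈ K
  · have heq : addFace K {a, b} = K := by
      apply Set.eq_of_subset_of_subset
      · rintro x (hx | hx)
        · exact hx
        · exact hK.2 _ habK x hx
      · exact Set.subset_union_left
    rw [heq]
    exact ⟨id, fun _ _ h => h⟩
  · have habsubK : ∀ G ∈ K, ¬ (({a, b} : Finset V) ⊆ G) := fun G hG hsub =>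
      habK (hK.2 G hG _ hsub)
    have hEfree : ∀ G, IsFacet K G → a ∈ G → G = E := by
      intro G hG haG
      obtain ⟨X, _, hXuniq⟩ := ha.2
      rw [hXuniq G ⟨hG, haG⟩, hXuniq E ⟨hE, haE⟩]
    have hFfree : ∀ G, IsFacet K G → b ∈ G → G = F := by
      intro G hG hbG
      obtain ⟨X, _, hXuniq⟩ := hb.2
      rw [hXuniq G ⟨hG, hbG⟩, hXuniq F ⟨hF, hbF⟩]
    have hbE : b ∉ E := fun h => hEF (hFfree E hE h)
    have haF : a ∉ F := fun h => hEF (hEfree F hF h).symm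
    have henum : ∀ x : Finset V, x ⊆ ({a, b} : Finset V) →
        x = ∅ ∨ x = {a} ∨ x = {b} ∨ x = ({a, b} : Finset V) := by
      intro x hx
      by_cases hax : a ∈ x <;> by_cases hbx : b ∈ x
      · exact Or.inr (Or.inr (Or.inr (Finset.Subset.antisymm hx
          (Finset.insert_subset hax (Finset.singleton_subset_iff.2 hbx)))))
      · refine Or.inr (Or.inl (Finset.Subset.antisymm ?_ (Finset.singleton_subset_iff.2 hax)))
        intro v hv
        rcases Finset.mem_insert.1 (hx hv) with h | h
        · simp [h]
        · exact absurd ((Finset.mem_singleton.1 h) ▸ hv) hbx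
      · refine Or.inr (Or.inr (Or.inl (Finset.Subset.antisymm ?_
          (Finset.singleton_subset_iff.2 hbx))))
        intro v hv
        rcases Finset.mem_insert.1 (hx hv) with h | h
        · exact absurd (h ▸ hv) hax
        · simp [Finset.mem_singleton.1 h]
      · left
        rw [← Finset.subset_empty]
        intro v hv
        rcases Finset.mem_insert.1 (hx hv) with h | h
        · exact absurd (h ▸ hv) hax
        · exact absurd ((Finset.mem_singleton.1 h) ▸ hv) hbx
    have hnofacetsub : ∀ X, IsFacet K X → ¬ (X ⊆ ({a, b} : Finset V)) := by
      intro X hX hsub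
      rcases henum X hsub with rfl | rfl | rfl | rfl
      · have h0 := hX.2 E hE.1 (Finset.empty_subset E)
        have := hE2
        rw [← h0] at this
        simp at this
      · have hXE : ({a} : Finset V) = E := hEfree _ hX (Finset.mem_singleton_self a)
        have := hE2
        rw [← hXE] at this
        simp at this
      · have hXF : ({b} : Finset V) = F := hFfree _ hX (Finset.mem_singleton_self b)
        have := hF2
        rw [← hXF] at this
        simp at this
      · exact habK hX.1
    have habK'mem : ({a, b} : Finset V) ∈ addFace K {a, b} :=
      Or.inr (Finset.Subset.refl _)
    have hfacab : IsFacet (addFace K {a, b}) ({a, b} : Finset V) := by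
      refine ⟨habK'mem, fun y hy hsub => ?_⟩
      rcases hy with hy | hy
      · exact absurd hsub (habsubK y hy)
      · exact Finset.Subset.antisymm hsub hy
    have hfacK_of : ∀ X, IsFacet K X → IsFacet (addFace K {a, b}) X := by
      intro X hX
      refine ⟨Or.inl hX.1, fun y hy hsub => ?_⟩
      rcases hy with hy | hy
      · exact hX.2 y hy hsub
      · exact absurd (hsub.trans hy) (hnofacetsub X hX)
    have hfacK' : ∀ X, IsFacet (addFace K {a, b}) X ↔
        (IsFacet K X ∨ X = ({a, b} : Finset V)) := by
      intro X
      constructor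
      · intro hX
        rcases hX.1 with h | h
        · exact Or.inl ⟨h, fun y hy => hX.2 y (Or.inl hy)⟩
        · exact Or.inr (hX.2 _ habK'mem h)
      · rintro (h | rfl)
        · exact hfacK_of X h
        · exact hfacab
    constructor
    · -- forward direction
      rintro ⟨l, hnd, hfac, hstep⟩
      have habnl : ({a, b} : Finset V) ∉ l := fun h => habK ((hfac _).2 h).1
      refine ⟨l ++ [({a, b} : Finset V)], ?_, ?_, ?_⟩
      · rw [List.nodup_append]
        refine ⟨hnd, List.nodup_singleton _, fun x hx y hx' => ?_⟩
        rw [List.mem_singleton] at hx'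
        exact fun hxy => by subst hx' hxy; exact habnl hx
      · intro X
        rw [hfacK', List.mem_append, List.mem_singleton, hfac]
      · intro i h
        have hlen : i + 1 < l.length + 1 := by simpa using h
        rcases Nat.lt_succ_iff_lt_or_eq.1 hlen with h1 | h1
        · have hg : (l ++ [({a, b} : Finset V)]).get ⟨i + 1, h⟩ = l.get ⟨i + 1, h1⟩ := by
            simp only [List.get_eq_getElem]
            exact List.getElem_append_left h1
          have ht : (l ++ [({a, b} : Finset V)]).take (i + 1) = l.take (i + 1) :=
            List.take_append_of_le_length (le_of_lt h1)
          rw [hg, ht]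
          exact hstep i h1
        · have hg : (l ++ [({a, b} : Finset V)]).get ⟨i + 1, h⟩ = ({a, b} : Finset V) := by
            simp only [List.get_eq_getElem]
            exact List.getElem_concat_length h1 _
          have ht : (l ++ [({a, b} : Finset V)]).take (i + 1) = l := by
            rw [h1]
            exact List.take_left
          rw [hg, ht]
          have hI : gen {x : Finset V | x ∈ l} ∩ gen {({a, b} : Finset V)} =
              {(∅ : Finset V), {a}, {b}} := by
            ext x
            simp only [Set.mem_inter_iff, gen, Set.mem_setOf_eq, Set.mem_insert_iff,
              Set.mem_singleton_iff]
            constructor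
            · rintro ⟨⟨H, hHl, hxH⟩, ⟨y, rfl, hxy⟩⟩
              rcases henum x hxy with rfl | rfl | rfl | rfl
              · exact Or.inl rfl
              · exact Or.inr (Or.inl rfl)
              · exact Or.inr (Or.inr rfl)
              · exact absurd hxH (habsubK H ((hfac H).2 hHl).1)
            · rintro (rfl | rfl | rfl)
              · exact ⟨⟨E, (hfac E).1 hE, Finset.empty_subset E⟩,
                  ⟨{a, b}, rfl, Finset.empty_subset _⟩⟩
              · exact ⟨⟨E, (hfac E).1 hE, Finset.singleton_subset_iff.2 haE⟩,
                  ⟨{a, b}, rfl, by simp⟩⟩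
              · exact ⟨⟨F, (hfac F).1 hF, Finset.singleton_subset_iff.2 hbF⟩,
                  ⟨{a, b}, rfl, by simp⟩⟩
          rw [hI]
          have hafac : IsFacet ({(∅ : Finset V), {a}, {b}} : Set (Finset V)) {a} := by
            refine ⟨Or.inr (Or.inl rfl), fun y hy hsub => ?_⟩
            rcases hy with rfl | rfl | rfl
            · exact absurd (hsub (Finset.mem_singleton_self a)) (Finset.notMem_empty a)
            · rfl
            · exact absurd (Finset.mem_singleton.1 (hsub (Finset.mem_singleton_self a))) hab
          refine ⟨⟨{a}, hafac⟩, fun X hX => ?_⟩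
          rcases hX.1 with rfl | rfl | rfl
          · exfalso
            have := hX.2 {a} (Or.inr (Or.inl rfl)) (Finset.empty_subset _)
            exact (Finset.singleton_ne_empty a) this.symm
          · rw [Finset.card_singleton, Finset.card_pair hab]
          · rw [Finset.card_singleton, Finset.card_pair hab]
    · -- backward direction
      rintro hE3 hF3 ⟨l', hnd', hfac', hstep'⟩
      have habl' : ({a, b} : Finset V) ∈ l' := (hfac' _).1 hfacab
      obtain ⟨u, w, rfl⟩ := List.append_of_mem habl'
      have hndsplit := List.nodup_append.1 hnd'
      have habw : ({a, b} : Finset V) ∉ w := (List.nodup_cons.1 hndsplit.2.1).1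
      have habu : ({a, b} : Finset V) ∉ u := fun h =>
        hndsplit.2.2 _ h _ List.mem_cons_self rfl
      have hndl : (u ++ w).Nodup :=
        ((List.sublist_cons_self _ w).append_left u).nodup hnd'
      have hfacl : ∀ X, IsFacet K X ↔ X ∈ u ++ w := by
        intro X
        constructor
        · intro hX
          have hXm : X ∈ u ++ ({a, b} : Finset V) :: w := (hfac' X).1 (hfacK_of X hX)
          have hne : X ≠ ({a, b} : Finset V) := fun h => habK (h ▸ hX.1)
          rcases List.mem_append.1 hXm with h | h
          · exact List.mem_append.2 (Or.inl h)
          · rcases List.mem_cons.1 h with h | h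
            · exact absurd h hne
            · exact List.mem_append.2 (Or.inr h)
        · intro hX
          have hne : X ≠ ({a, b} : Finset V) := by
            rintro rfl
            rcases List.mem_append.1 hX with h | h
            · exact habu h
            · exact habw h
          have hXm : X ∈ u ++ ({a, b} : Finset V) :: w := by
            rcases List.mem_append.1 hX with h | h
            · exact List.mem_append.2 (Or.inl h)
            · exact List.mem_append.2 (Or.inr (List.mem_cons.2 (Or.inr h)))
          rcases (hfacK' X).1 ((hfac' X).2 hXm) with h | h
          · exact h
          · exact absurd h hne
      refine ⟨u ++ w, hndl, hfacl, ?_⟩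
      intro i h
      by_cases hcase : i + 1 < u.length
      · have h' : i + 1 < (u ++ ({a, b} : Finset V) :: w).length := by
          simp only [List.length_append, List.length_cons]
          simp only [List.length_append] at h
          omega
        have hg : (u ++ w).get ⟨i + 1, h⟩ =
            (u ++ ({a, b} : Finset V) :: w).get ⟨i + 1, h'⟩ := by
          simp only [List.get_eq_getElem]
          rw [List.getElem_append_left hcase, List.getElem_append_left hcase]
        have ht : (u ++ w).take (i + 1) = (u ++ ({a, b} : Finset V) :: w).take (i + 1) := by
          rw [List.take_append_of_le_length (le_of_lt hcase),
            List.take_append_of_le_length (le_of_lt hcase)]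
        rw [hg, ht]
        exact hstep' i h'
      · push_neg at hcase
        have h' : i + 1 + 1 < (u ++ ({a, b} : Finset V) :: w).length := by
          simp only [List.length_append, List.length_cons]
          simp only [List.length_append] at h
          omega
        have hg' : (u ++ ({a, b} : Finset V) :: w).get ⟨i + 1 + 1, h'⟩ =
            (u ++ w).get ⟨i + 1, h⟩ := stmt9_get_helper u w _ (i + 1) hcase h h'
        set G := (u ++ w).get ⟨i + 1, h⟩ with hGdef
        have hGfac : IsFacet K G := (hfacl G).2 (List.get_mem _ _)
        have ht : (u ++ w).take (i + 1) = u ++ w.take (i + 1 - u.length) := by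
          rw [List.take_append, List.take_of_length_le hcase]
        have ht2 : (u ++ ({a, b} : Finset V) :: w).take (i + 1 + 1) =
            u ++ ({a, b} : Finset V) :: w.take (i + 1 - u.length) := by
          rw [List.take_append,
            List.take_of_length_le (by omega : u.length ≤ i + 1 + 1),
            show i + 1 + 1 - u.length = (i + 1 - u.length) + 1 by omega,
            List.take_succ_cons]
        have hset : {x : Finset V | x ∈ u ++ ({a, b} : Finset V) :: w.take (i + 1 - u.length)} =
            {x : Finset V | x ∈ u ++ w.take (i + 1 - u.length)} ∪ {({a, b} : Finset V)} := by
          ext x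
          simp only [Set.mem_setOf_eq, Set.mem_union, Set.mem_singleton_iff,
            List.mem_append, List.mem_cons]
          tauto
        have hsmall : gen {({a, b} : Finset V)} ∩ gen {G} =
            {x : Finset V | x ⊆ ({a, b} : Finset V) ∩ G} := by
          ext x
          simp only [Set.mem_inter_iff, gen, Set.mem_setOf_eq, Set.mem_singleton_iff,
            Finset.subset_inter_iff]
          constructor
          · rintro ⟨⟨y, rfl, hxy⟩, ⟨z, rfl, hxz⟩⟩
            exact ⟨hxy, hxz⟩
          · rintro ⟨h1, h2⟩
            exact ⟨⟨_, rfl, h1⟩, ⟨_, rfl, h2⟩⟩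
        have hkey := hstep' (i + 1) h'
        rw [hg', ht2, hset, stmt9_gen_union, Set.union_inter_distrib_right, hsmall] at hkey
        rw [ht]
        set I := gen {x : Finset V | x ∈ u ++ w.take (i + 1 - u.length)} ∩ gen {G} with hIdef
        have hbd : ∀ x ∈ I, x ⊆ G := by
          rintro x ⟨_, y, hy, hxy⟩
          exact hy ▸ hxy
        by_cases haG : a ∈ G <;> by_cases hbG : b ∈ G
        · exact absurd (Finset.insert_subset haG (Finset.singleton_subset_iff.2 hbG))
            (habsubK G hGfac.1)
        · have hs : ({a, b} : Finset V) ∩ G = {a} := by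
            ext v
            simp only [Finset.mem_inter, Finset.mem_insert, Finset.mem_singleton]
            constructor
            · rintro ⟨h1 | h1, h2⟩
              · exact h1
              · exact absurd (h1 ▸ h2) hbG
            · rintro rfl
              exact ⟨Or.inl rfl, haG⟩
          rw [hs] at hkey
          have hGE : G = E := hEfree G hGfac haG
          have hlt : ({a} : Finset V).card + 1 < G.card := by
            rw [Finset.card_singleton, hGE]
            omega
          exact stmt9_transfer hbd (Finset.singleton_subset_iff.2 haG) hkey.1 hkey.2 hlt
        · have hs : ({a, b} : Finset V) ∩ G = {b} := by
            ext v
            simp only [Finset.mem_inter, Finset.mem_insert, Finset.mem_singleton]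
            constructor
            · rintro ⟨h1 | h1, h2⟩
              · exact absurd (h1 ▸ h2) haG
              · exact h1
            · rintro rfl
              exact ⟨Or.inr rfl, hbG⟩
          rw [hs] at hkey
          have hGF : G = F := hFfree G hGfac hbG
          have hlt : ({b} : Finset V).card + 1 < G.card := by
            rw [Finset.card_singleton, hGF]
            omega
          exact stmt9_transfer hbd (Finset.singleton_subset_iff.2 hbG) hkey.1 hkey.2 hlt
        · have hs : ({a, b} : Finset V) ∩ G = ∅ := by
            ext v
            simp only [Finset.mem_inter, Finset.mem_insert, Finset.mem_singleton,
              Finset.notMem_empty, iff_false, not_and]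
            rintro (rfl | rfl)
            · exact haG
            · exact hbG
          rw [hs] at hkey
          have hlen0 : (u ++ w.take (i + 1 - u.length)).length = i + 1 := by
            rw [← ht, List.length_take]
            exact Nat.min_eq_left (le_of_lt h)
          have hne : u ++ w.take (i + 1 - u.length) ≠ [] := by
            intro hnil
            rw [hnil] at hlen0
            simp at hlen0
          obtain ⟨y, hy⟩ := List.exists_mem_of_ne_nil _ hne
          have hemp : (∅ : Finset V) ∈ I := by
            exact ⟨⟨y, hy, Finset.empty_subset y⟩, ⟨G, rfl, Finset.empty_subset G⟩⟩
          have hunion : I ∪ {x : Finset V | x ⊆ (∅ : Finset V)} = I := by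
            apply Set.union_eq_self_of_subset_right
            intro x hx
            have : x = ∅ := Finset.subset_empty.1 hx
            rw [this]
            exact hemp
          rw [hunion] at hkey
          exact hkey
end
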